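/- arXiv:1609.03738 — 2 statements merged into one kernel-verified Lean document; each statement's English description precedes it below -/
import Mathlib

section
/- Let m ≥ 1, n ≥ 1 and k ≥ 0 be integers, let r > 0 and q > 0 be real numbers, and let α, β ∈ ℂ with |α| < r and |β| < r. Then (1/(2πi)) ∮_{|u|=r} q^u (α+u)^{-m} (u-β)^{-n} u^{-(k+1)} du = ((log q)^{k+m+n}/(k!·(m-1)!·(n-1)!)) · ∬_{a ≥ 0, b ≥ 0, a+b ≤ 1} (1-a-b)^k q^{-aα+bβ} a^{m-1} b^{n-1} da db. -/
open Filter MeasureTheory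


open MeasureTheory Set Metric intervalIntegral

lemma hasDerivAt_pointwise (gt wt ct z : ℂ) (N : ℕ) (hd : wt - ct * z ≠ 0) :
    HasDerivAt (fun z => gt / (wt - ct * z) ^ N)
      (gt * ((N : ℂ) * ct) / (wt - ct * z) ^ (N + 1)) z := by
  have h1 : HasDerivAt (fun z : ℂ => wt - ct * z) (-ct) z := by
    simpa using ((hasDerivAt_id z).const_mul ct).const_sub wt
  have h2 := (h1.pow N).inv (pow_ne_zero N hd)
  have h3 := h2.const_mul gt
  set d := wt - ct * z with hdd
  have hkey : gt * (-(↑N * d ^ (N - 1) * -ct) / (d ^ N) ^ 2) = gt * ((N : ℂ) * ct) / d ^ (N + 1) := by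
    rcases Nat.eq_zero_or_pos N with h | h
    · simp [h]
    · have e1 : (d ^ N) ^ 2 = d ^ (N - 1) * d ^ (N + 1) := by
        rw [← pow_add, ← pow_mul]; congr 1; omega
      rw [e1, show -(↑N * d ^ (N - 1) * -ct) = d ^ (N - 1) * ((N : ℂ) * ct) by ring,
        mul_div_mul_left _ _ (pow_ne_zero _ hd), mul_div_assoc]
      ring
  have h4 : HasDerivAt (fun z : ℂ => gt * ((wt - ct * z) ^ N)⁻¹)
      (gt * ((N : ℂ) * ct) / d ^ (N + 1)) z := hkey ▸ h3
  refine h4.congr_of_eventuallyEq (Filter.Eventually.of_forall fun y => ?_)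
  simp [div_eq_mul_inv]

set_option maxHeartbeats 1000000 in
lemma hasDerivAt_param (a b : ℝ) (g w c : ℝ → ℂ) (N : ℕ) (z₀ : ℂ) (ε δ G C : ℝ)
    (hε : 0 < ε) (hδ : 0 < δ) (hCpos : 0 ≤ C) (hGpos : 0 ≤ G)
    (hg : ContinuousOn g (Set.uIcc a b)) (hw : ContinuousOn w (Set.uIcc a b))
    (hc : ContinuousOn c (Set.uIcc a b))
    (hG : ∀ t ∈ Set.uIcc a b, ‖g t‖ ≤ G) (hC : ∀ t ∈ Set.uIcc a b, ‖c t‖ ≤ C)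
    (hlow : ∀ t ∈ Set.uIcc a b, ∀ z ∈ Metric.ball z₀ ε, δ ≤ ‖w t - c t * z‖) :
    HasDerivAt (fun z => ∫ t in a..b, g t / (w t - c t * z) ^ N)
      (∫ t in a..b, g t * ((N : ℂ) * c t) / (w t - c t * z₀) ^ (N + 1)) z₀ := by
  have hz₀ : z₀ ∈ Metric.ball z₀ ε := Metric.mem_ball_self hε
  have hsub : Set.uIoc a b ⊆ Set.uIcc a b := Set.uIoc_subset_uIcc
  have hne0 : ∀ z ∈ Metric.ball z₀ ε, ∀ t ∈ Set.uIcc a b, w t - c t * z ≠ 0 := by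
    intro z hz t ht h0
    have := hlow t ht z hz
    rw [h0, norm_zero] at this
    exact absurd this (not_le.2 hδ)
  have hcont : ∀ z ∈ Metric.ball z₀ ε, ∀ M : ℕ,
      ContinuousOn (fun t => (w t - c t * z) ^ M) (Set.uIcc a b) :=
    fun z hz M => ((hw.sub (hc.mul continuousOn_const)).pow M)
  have hne : ∀ z ∈ Metric.ball z₀ ε, ∀ t ∈ Set.uIcc a b, ∀ M : ℕ, (w t - c t * z) ^ M ≠ 0 :=
    fun z hz t ht M => pow_ne_zero M (hne0 z hz t ht)
  have hmeas : ∀ᶠ x in nhds z₀, AEStronglyMeasurable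
      (fun t => g t / (w t - c t * x) ^ N) (volume.restrict (Set.uIoc a b)) := by
    filter_upwards [Metric.ball_mem_nhds z₀ hε] with z hz
    exact ((hg.div (hcont z hz N) (fun t ht => hne z hz t ht N)).mono hsub).aestronglyMeasurable
      measurableSet_uIoc
  have hint : IntervalIntegrable (fun t => g t / (w t - c t * z₀) ^ N) volume a b :=
    (hg.div (hcont z₀ hz₀ N) (fun t ht => hne z₀ hz₀ t ht N)).intervalIntegrable
  have hmeas' : AEStronglyMeasurable (fun t => g t * ((N : ℂ) * c t) / (w t - c t * z₀) ^ (N + 1))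
      (volume.restrict (Set.uIoc a b)) :=
    (((hg.mul (continuousOn_const.mul hc)).div (hcont z₀ hz₀ (N + 1))
      (fun t ht => hne z₀ hz₀ t ht (N + 1))).mono hsub).aestronglyMeasurable measurableSet_uIoc
  have hbnd : ∀ᵐ t ∂(volume : Measure ℝ), t ∈ Set.uIoc a b → ∀ x ∈ Metric.ball z₀ ε,
      ‖g t * ((N : ℂ) * c t) / (w t - c t * x) ^ (N + 1)‖ ≤ G * ((N : ℝ) * C) / δ ^ (N + 1) := by
    refine Filter.Eventually.of_forall (fun t ht x hx => ?_)
    have ht' := hsub ht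
    rw [norm_div]
    have h1 : ‖g t * ((N : ℂ) * c t)‖ ≤ G * ((N : ℝ) * C) := by
      rw [norm_mul, norm_mul]
      have e : ‖(N : ℂ)‖ = (N : ℝ) := by simp
      rw [e]
      gcongr
      · exact hG t ht'
      · exact hC t ht'
    have h2 : δ ^ (N + 1) ≤ ‖(w t - c t * x) ^ (N + 1)‖ := by
      rw [norm_pow]
      exact pow_le_pow_left₀ hδ.le (hlow t ht' x hx) _
    exact div_le_div₀ (by positivity) h1 (by positivity) h2
  have hbint : IntervalIntegrable (fun _ : ℝ => G * ((N : ℝ) * C) / δ ^ (N + 1)) volume a b :=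
    intervalIntegrable_const
  have hdiff : ∀ᵐ t ∂(volume : Measure ℝ), t ∈ Set.uIoc a b → ∀ x ∈ Metric.ball z₀ ε,
      HasDerivAt (fun x => g t / (w t - c t * x) ^ N)
        (g t * ((N : ℂ) * c t) / (w t - c t * x) ^ (N + 1)) x := by
    refine Filter.Eventually.of_forall (fun t ht x hx => ?_)
    exact hasDerivAt_pointwise (g t) (w t) (c t) x N (hne0 x hx t (hsub ht))
  have key := intervalIntegral.hasDerivAt_integral_of_dominated_loc_of_deriv_le
    (F := fun z t => g t / (w t - c t * z) ^ N)
    (F' := fun z t => g t * ((N : ℂ) * c t) / (w t - c t * z) ^ (N + 1))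
    (bound := fun _ : ℝ => G * ((N : ℝ) * C) / δ ^ (N + 1))
    (μ := volume) (a := a) (b := b) (x₀ := z₀)
    (Metric.ball_mem_nhds z₀ hε) hmeas hint hmeas' hbnd hbint hdiff
  exact key.2

lemma conv_lower (u z₁ z₂ : ℂ) (ρ : ℝ) (h1 : ‖z₁‖ ≤ ρ) (h2 : ‖z₂‖ ≤ ρ)
    (t : ℝ) (ht0 : 0 ≤ t) (ht1 : t ≤ 1) :
    ‖u‖ - ρ ≤ ‖(u - (t : ℂ) * z₁) - (1 - (t : ℂ)) * z₂‖ := by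
  have e : (u - (t : ℂ) * z₁) - (1 - (t : ℂ)) * z₂ = u - ((t : ℂ) * z₁ + (1 - (t : ℂ)) * z₂) := by
    ring
  rw [e]
  have hb : ‖(t : ℂ) * z₁ + (1 - (t : ℂ)) * z₂‖ ≤ ρ := by
    calc ‖(t : ℂ) * z₁ + (1 - (t : ℂ)) * z₂‖ ≤ ‖(t : ℂ) * z₁‖ + ‖(1 - (t : ℂ)) * z₂‖ :=
          norm_add_le _ _
      _ = t * ‖z₁‖ + (1 - t) * ‖z₂‖ := by
          rw [norm_mul, norm_mul]
          have e1 : ‖(t : ℂ)‖ = t := by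
            rw [Complex.norm_real, Real.norm_of_nonneg ht0]
          have e2 : ‖(1 : ℂ) - (t : ℂ)‖ = 1 - t := by
            rw [show (1 : ℂ) - (t : ℂ) = ((1 - t : ℝ) : ℂ) by push_cast; ring,
              Complex.norm_real, Real.norm_of_nonneg (by linarith)]
          rw [e1, e2]
      _ ≤ t * ρ + (1 - t) * ρ := by
          have a1 := mul_le_mul_of_nonneg_left h1 ht0
          have a2 := mul_le_mul_of_nonneg_left h2 (by linarith : (0:ℝ) ≤ 1 - t)
          linarith
      _ = ρ := by ring
  calc ‖u‖ - ρ ≤ ‖u‖ - ‖(t : ℂ) * z₁ + (1 - (t : ℂ)) * z₂‖ := by linarith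
    _ ≤ ‖u - ((t : ℂ) * z₁ + (1 - (t : ℂ)) * z₂)‖ := norm_sub_norm_le _ _

lemma lemA_base (r : ℝ) (hr : 0 < r) (u : ℂ) (hu : r ≤ ‖u‖) (z₁ z₂ : ℂ)
    (h1 : ‖z₁‖ < r) (h2 : ‖z₂‖ < r) :
    1 / ((u - z₁) * (u - z₂)) =
      ∫ t in (0:ℝ)..1, 1 / ((u - (t : ℂ) * z₁) - (1 - (t : ℂ)) * z₂) ^ 2 := by
  set ρ : ℝ := max ‖z₁‖ ‖z₂‖ with hρ
  have hρr : ρ < r := max_lt h1 h2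
  have hlow : ∀ t : ℝ, t ∈ Set.Icc (0:ℝ) 1 →
      r - ρ ≤ ‖(u - (t : ℂ) * z₁) - (1 - (t : ℂ)) * z₂‖ := by
    intro t ht
    have := conv_lower u z₁ z₂ ρ (le_max_left _ _) (le_max_right _ _) t ht.1 ht.2
    linarith
  have hne : ∀ t : ℝ, t ∈ Set.Icc (0:ℝ) 1 →
      (u - (t : ℂ) * z₁) - (1 - (t : ℂ)) * z₂ ≠ 0 := by
    intro t ht h0
    have := hlow t ht
    rw [h0, norm_zero] at this
    linarith
  have hne1 : u - z₁ ≠ 0 := by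
    have := hne 1 (by norm_num)
    simpa using this
  have hne2 : u - z₂ ≠ 0 := by
    have := hne 0 (by norm_num)
    simpa using this
  by_cases hz : z₁ = z₂
  · subst hz
    have e : ∀ t : ℝ, (u - (t : ℂ) * z₁) - (1 - (t : ℂ)) * z₁ = u - z₁ := fun t => by ring
    simp only [e]
    rw [intervalIntegral.integral_const]
    simp [sq, one_div, mul_inv]
  · have hcont : ContinuousOn (fun t : ℝ => 1 / ((u - (t : ℂ) * z₁) - (1 - (t : ℂ)) * z₂) ^ 2)
        (Set.uIcc (0:ℝ) 1) := by
      rw [Set.uIcc_of_le (by norm_num : (0:ℝ) ≤ 1)]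
      refine ContinuousOn.div continuousOn_const ?_ fun t ht => pow_ne_zero _ (hne t ht)
      fun_prop
    have hderiv : ∀ t ∈ Set.uIcc (0:ℝ) 1,
        HasDerivAt (fun t : ℝ => (z₁ - z₂)⁻¹ / ((u - (t : ℂ) * z₁) - (1 - (t : ℂ)) * z₂))
          (1 / ((u - (t : ℂ) * z₁) - (1 - (t : ℂ)) * z₂) ^ 2) t := by
      intro t ht
      rw [Set.uIcc_of_le (by norm_num : (0:ℝ) ≤ 1)] at ht
      have hφ : HasDerivAt (fun t : ℝ => (u - (t : ℂ) * z₁) - (1 - (t : ℂ)) * z₂)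
          (-(z₁ - z₂)) t := by
        have hco : HasDerivAt (fun t : ℝ => (t : ℂ)) 1 t := Complex.ofRealCLM.hasDerivAt
        have := ((hco.mul_const z₁).const_sub u).sub ((hco.const_sub 1).mul_const z₂)
        exact this.congr_deriv (by ring)
      have hinv := (hasDerivAt_const t ((z₁ - z₂)⁻¹)).div hφ (hne t ht)
      refine hinv.congr_deriv ?_
      field_simp [sub_ne_zero.2 hz]
      ring
    have := intervalIntegral.integral_eq_sub_of_hasDerivAt hderiv hcont.intervalIntegrable
    rw [this]
    push_cast
    rw [show (u - (1:ℂ) * z₁) - (1 - (1:ℂ)) * z₂ = u - z₁ by ring,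
      show (u - (0:ℂ) * z₁) - (1 - (0:ℂ)) * z₂ = u - z₂ by ring]
    field_simp [sub_ne_zero.2 hz]
    ring

/-- The two-pole merging identity (Feynman-parameter / Hermite–Genocchi style). -/
def lemA_stmt (u : ℂ) (p q : ℕ) (z₁ z₂ : ℂ) : Prop :=
  1 / ((u - z₁) ^ (p + 1) * (u - z₂) ^ (q + 1)) =
    (((p + q + 1).factorial : ℂ) / ((p.factorial : ℂ) * (q.factorial : ℂ))) *
      ∫ t in (0:ℝ)..1, ((t : ℂ) ^ p * (1 - (t : ℂ)) ^ q) /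
        ((u - (t : ℂ) * z₁) - (1 - (t : ℂ)) * z₂) ^ (p + q + 2)

lemma lemA_symm (u : ℂ) (p q : ℕ) (z₁ z₂ : ℂ) (h : lemA_stmt u p q z₁ z₂) :
    lemA_stmt u q p z₂ z₁ := by
  unfold lemA_stmt at h ⊢
  have e1 : ∫ t in (0:ℝ)..1, ((t : ℂ) ^ q * (1 - (t : ℂ)) ^ p) /
      ((u - (t : ℂ) * z₂) - (1 - (t : ℂ)) * z₁) ^ (q + p + 2) =
      ∫ t in (0:ℝ)..1, ((t : ℂ) ^ p * (1 - (t : ℂ)) ^ q) /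
      ((u - (t : ℂ) * z₁) - (1 - (t : ℂ)) * z₂) ^ (p + q + 2) := by
    have := intervalIntegral.integral_comp_sub_left (a := (0:ℝ)) (b := 1)
      (fun t : ℝ => ((t : ℂ) ^ q * (1 - (t : ℂ)) ^ p) /
        ((u - (t : ℂ) * z₂) - (1 - (t : ℂ)) * z₁) ^ (q + p + 2)) 1
    norm_num at this
    rw [← this]
    apply intervalIntegral.integral_congr
    intro t _
    simp only
    push_cast
    rw [show q + p + 2 = p + q + 2 by ring]
    congr 1
    · ring
    · congr 1
      ring
  rw [e1, show q + p + 1 = p + q + 1 by ring, mul_comm ((u - z₂) ^ (q+1)) ((u - z₁) ^ (p+1)),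
    mul_comm ((q.factorial : ℂ)) ((p.factorial : ℂ))]
  exact h

lemma norm_lt_of_ball {ε : ℝ} {z₂ z : ℂ} (hz : z ∈ Metric.ball z₂ ε) : ‖z‖ ≤ ‖z₂‖ + ε := by
  have := mem_ball_iff_norm.1 hz
  calc ‖z‖ = ‖z₂ + (z - z₂)‖ := by ring_nf
    _ ≤ ‖z₂‖ + ‖z - z₂‖ := norm_add_le _ _
    _ ≤ ‖z₂‖ + ε := by linarith

lemma lemA_step (r : ℝ) (hr : 0 < r) (u : ℂ) (hu : r ≤ ‖u‖) (p q : ℕ)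
    (IH : ∀ z₁ z₂ : ℂ, ‖z₁‖ < r → ‖z₂‖ < r → lemA_stmt u p q z₁ z₂)
    (z₁ z₂ : ℂ) (h1 : ‖z₁‖ < r) (h2 : ‖z₂‖ < r) : lemA_stmt u p (q + 1) z₁ z₂ := by
  set ρ : ℝ := max ‖z₁‖ ‖z₂‖ with hρ
  have hρr : ρ < r := max_lt h1 h2
  set ε : ℝ := (r - ρ) / 2 with hε'
  have hε : 0 < ε := by simp only [hε']; linarith
  have hball : ∀ z ∈ Metric.ball z₂ ε, ‖z‖ < r := by
    intro z hz
    have := norm_lt_of_ball hz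
    have : ‖z‖ ≤ ‖z₂‖ + ε := this
    have hz2 : ‖z₂‖ ≤ ρ := le_max_right _ _
    simp only [hε'] at this ⊢
    linarith
  set g : ℝ → ℂ := fun t => (t : ℂ) ^ p * (1 - (t : ℂ)) ^ q with hg'
  set w : ℝ → ℂ := fun t => u - (t : ℂ) * z₁ with hw'
  set c : ℝ → ℂ := fun t => 1 - (t : ℂ) with hc'
  set N : ℕ := p + q + 2 with hN'
  have hlow : ∀ t ∈ Set.uIcc (0:ℝ) 1, ∀ z ∈ Metric.ball z₂ ε, ε ≤ ‖w t - c t * z‖ := by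
    intro t ht z hz
    rw [Set.uIcc_of_le (by norm_num : (0:ℝ) ≤ 1)] at ht
    have hzρ : ‖z‖ ≤ ρ + ε := le_trans (norm_lt_of_ball hz) (by have := le_max_right ‖z₁‖ ‖z₂‖; linarith)
    have hz1ρ : ‖z₁‖ ≤ ρ + ε := by have := le_max_left ‖z₁‖ ‖z₂‖; linarith
    have := conv_lower u z₁ z (ρ + ε) hz1ρ hzρ t ht.1 ht.2
    have : r - (ρ + ε) ≤ ‖(u - (t:ℂ) * z₁) - (1 - (t:ℂ)) * z‖ := by linarith
    simp only [hw', hc']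
    have hεe : r - (ρ + ε) = ε := by simp only [hε']; ring
    linarith [hεe ▸ this]
  have hbound01 : ∀ t ∈ Set.uIcc (0:ℝ) 1, ‖g t‖ ≤ 1 := by
    intro t ht
    rw [Set.uIcc_of_le (by norm_num : (0:ℝ) ≤ 1)] at ht
    simp only [hg', norm_mul, norm_pow]
    have e1 : ‖(t:ℂ)‖ = t := by rw [Complex.norm_real, Real.norm_of_nonneg ht.1]
    have e2 : ‖1 - (t:ℂ)‖ = 1 - t := by
      rw [show (1:ℂ) - (t:ℂ) = ((1 - t : ℝ) : ℂ) by push_cast; ring, Complex.norm_real,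
        Real.norm_of_nonneg (by linarith [ht.2])]
    rw [e1, e2]
    have hp1 : t ^ p ≤ 1 := pow_le_one₀ ht.1 ht.2
    have hq1 : (1 - t) ^ q ≤ 1 := pow_le_one₀ (by linarith [ht.2]) (by linarith [ht.1])
    have hqn : (0:ℝ) ≤ (1 - t) ^ q := pow_nonneg (by linarith [ht.2]) q
    nlinarith [pow_nonneg ht.1 p]
  have hboundc : ∀ t ∈ Set.uIcc (0:ℝ) 1, ‖c t‖ ≤ 1 := by
    intro t ht
    rw [Set.uIcc_of_le (by norm_num : (0:ℝ) ≤ 1)] at ht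
    simp only [hc']
    rw [show (1:ℂ) - (t:ℂ) = ((1 - t : ℝ) : ℂ) by push_cast; ring, Complex.norm_real,
      Real.norm_of_nonneg (by linarith [ht.2])]
    linarith [ht.1]
  have hD := hasDerivAt_param 0 1 g w c N z₂ ε ε 1 1 hε hε zero_le_one zero_le_one
    (by fun_prop) (by fun_prop) (by fun_prop) hbound01 hboundc hlow
  set cst : ℂ := ((p + q + 1).factorial : ℂ) / ((p.factorial : ℂ) * (q.factorial : ℂ)) with hcst'
  have hE := hD.const_mul cst
  have heqn : (fun z => cst * ∫ t in (0:ℝ)..1, g t / (w t - c t * z) ^ N) =ᶠ[nhds z₂]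
      (fun z => 1 / ((u - z₁) ^ (p + 1) * (u - z) ^ (q + 1))) := by
    filter_upwards [Metric.ball_mem_nhds z₂ hε] with z hz
    exact (IH z₁ z h1 (hball z hz)).symm
  have hF := hE.congr_of_eventuallyEq heqn.symm
  -- explicit derivative of the left-hand side
  have hXne : (u - z₁) ^ (p + 1) ≠ 0 := by
    apply pow_ne_zero
    intro h0
    have : ‖u - z₁‖ = 0 := by rw [h0, norm_zero]
    have := norm_sub_norm_le u z₁
    rw [‹‖u - z₁‖ = 0›] at this
    linarith
  have hne2 : ∀ z, ‖z‖ < r → u - z ≠ 0 := by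
    intro z hz h0
    have : ‖u - z‖ = 0 := by rw [h0, norm_zero]
    have := norm_sub_norm_le u z
    linarith [this, ‹‖u - z‖ = 0›]
  have hG0 := hasDerivAt_pointwise (((u - z₁) ^ (p + 1))⁻¹) u 1 z₂ (q + 1)
    (by rw [one_mul]; exact hne2 z₂ h2)
  have hG : HasDerivAt (fun z => 1 / ((u - z₁) ^ (p + 1) * (u - z) ^ (q + 1)))
      (((u - z₁) ^ (p + 1))⁻¹ * (((q + 1 : ℕ) : ℂ) * 1) / (u - 1 * z₂) ^ (q + 1 + 1)) z₂ := by
    refine hG0.congr_of_eventuallyEq (Filter.Eventually.of_forall fun z => ?_)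
    simp only [one_mul, one_div, mul_inv, div_eq_mul_inv]
  have huniq := hF.unique hG
  -- rewrite the derivative integral
  set J : ℂ := ∫ t in (0:ℝ)..1, ((t : ℂ) ^ p * (1 - (t : ℂ)) ^ (q + 1)) /
      ((u - (t : ℂ) * z₁) - (1 - (t : ℂ)) * z₂) ^ (p + (q + 1) + 2) with hJ'
  have hint_eq : (∫ t in (0:ℝ)..1, g t * ((N : ℂ) * c t) / (w t - c t * z₂) ^ (N + 1))
      = (N : ℂ) * J := by
    rw [hJ', ← intervalIntegral.integral_const_mul]
    apply intervalIntegral.integral_congr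
    intro t _
    simp only [hg', hw', hc', hN']
    rw [show p + (q + 1) + 2 = (p + q + 2) + 1 by ring]
    ring
  rw [hint_eq] at huniq
  -- final algebra
  unfold lemA_stmt
  have hz2ne : u - z₂ ≠ 0 := hne2 z₂ h2
  have hfp : (p.factorial : ℂ) ≠ 0 := Nat.cast_ne_zero.2 p.factorial_ne_zero
  have hfq : (q.factorial : ℂ) ≠ 0 := Nat.cast_ne_zero.2 q.factorial_ne_zero
  have e2 : ((p + (q + 1) + 1).factorial : ℂ) = ((p + q + 2 : ℕ) : ℂ) * ((p + q + 1).factorial : ℂ) := by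
    rw [show p + (q + 1) + 1 = (p + q + 1) + 1 by ring, Nat.factorial_succ]
    push_cast
    ring
  have e3 : (((q + 1).factorial : ℂ)) = ((q + 1 : ℕ) : ℂ) * (q.factorial : ℂ) := by
    rw [Nat.factorial_succ]
    push_cast
    ring
  have hNc : ((N : ℕ) : ℂ) = ((p + q + 2 : ℕ) : ℂ) := by rw [hN']
  have hq1ne : ((q + 1 : ℕ) : ℂ) ≠ 0 := Nat.cast_ne_zero.2 (by omega)
  have hXinv : (u - z₁) ^ (p + 1) ≠ 0 := hXne
  have hq2 : (u - z₂) ^ (q + 1 + 1) ≠ 0 := pow_ne_zero _ hz2ne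
  rw [e2, e3]
  apply mul_left_cancel₀ hq1ne
  have h2' : ((u - z₁) ^ (p + 1))⁻¹ * (((q + 1 : ℕ) : ℂ) * 1) / (u - 1 * z₂) ^ (q + 1 + 1)
      = ((q + 1 : ℕ) : ℂ) * (1 / ((u - z₁) ^ (p + 1) * (u - z₂) ^ (q + 1 + 1))) := by
    rw [mul_one, one_mul]
    field_simp
  rw [← h2', ← huniq, hcst']
  have hKK : ((q + 1 : ℕ) : ℂ) * (((p + q + 2 : ℕ) : ℂ) * ((p + q + 1).factorial : ℂ) /
      ((p.factorial : ℂ) * (((q + 1 : ℕ) : ℂ) * (q.factorial : ℂ))))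
      = (((p + q + 1).factorial : ℂ) / ((p.factorial : ℂ) * (q.factorial : ℂ))) * ((N : ℕ) : ℂ) := by
    have hPQ : (p.factorial : ℂ) * (((q + 1 : ℕ) : ℂ) * (q.factorial : ℂ)) ≠ 0 :=
      mul_ne_zero hfp (mul_ne_zero hq1ne hfq)
    have hPQ2 : (p.factorial : ℂ) * (q.factorial : ℂ) ≠ 0 := mul_ne_zero hfp hfq
    rw [hNc, mul_div_assoc', div_mul_eq_mul_div, div_eq_div_iff hPQ hPQ2]
    ring
  rw [← mul_assoc, ← hKK, mul_assoc]

lemma lemA (r : ℝ) (hr : 0 < r) (u : ℂ) (hu : r ≤ ‖u‖) :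
    ∀ p q : ℕ, ∀ z₁ z₂ : ℂ, ‖z₁‖ < r → ‖z₂‖ < r → lemA_stmt u p q z₁ z₂ := by
  have key : ∀ n p q : ℕ, p + q = n → ∀ z₁ z₂ : ℂ, ‖z₁‖ < r → ‖z₂‖ < r →
      lemA_stmt u p q z₁ z₂ := by
    intro n
    induction n with
    | zero =>
      intro p q hpq z₁ z₂ h1 h2
      obtain ⟨hp, hq⟩ : p = 0 ∧ q = 0 := by omega
      subst hp; subst hq
      unfold lemA_stmt
      have hb := lemA_base r hr u hu z₁ z₂ h1 h2
      simpa using hb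
    | succ n ih =>
      intro p q hpq z₁ z₂ h1 h2
      cases q with
      | succ q' =>
        exact lemA_step r hr u hu p q'
          (fun w₁ w₂ hw1 hw2 => ih p q' (by omega) w₁ w₂ hw1 hw2) z₁ z₂ h1 h2
      | zero =>
        have hp : p = n + 1 := by omega
        subst hp
        exact lemA_symm u 0 (n + 1) z₂ z₁
          (lemA_step r hr u hu 0 n (fun w₁ w₂ hw1 hw2 => ih 0 n (by omega) w₁ w₂ hw1 hw2)
            z₂ z₁ h2 h1)
  intro p q
  exact key (p + q) p q rfl

lemma cauchy_pow (r : ℝ) (hr : 0 < r) (cc : ℂ) :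
    ∀ M : ℕ, ∀ z : ℂ, ‖z‖ < r →
      (∮ u in C(0, r), Complex.exp (u * cc) / (u - z) ^ (M + 1)) =
        (2 * Real.pi * Complex.I) * (cc ^ M * Complex.exp (z * cc) / (M.factorial : ℂ)) := by
  have hunfold : ∀ (N : ℕ) (z' : ℂ),
      (∮ u in C(0, r), Complex.exp (u * cc) / (u - z') ^ N) =
        ∫ θ in (0:ℝ)..(2 * Real.pi),
          (deriv (circleMap 0 r) θ * Complex.exp (circleMap 0 r θ * cc)) /
            (circleMap 0 r θ - (1:ℂ) * z') ^ N := by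
    intro N z'
    simp only [circleIntegral, smul_eq_mul, one_mul, mul_div_assoc]
  intro M
  induction M with
  | zero =>
    intro z hz
    have hdiff : Differentiable ℂ (fun u : ℂ => Complex.exp (u * cc)) :=
      (differentiable_id.mul_const cc).cexp
    have hd : DiffContOnCl ℂ (fun u : ℂ => Complex.exp (u * cc)) (Metric.ball 0 r) :=
      hdiff.diffContOnCl
    have hz' : z ∈ Metric.ball (0:ℂ) r := by
      rw [Metric.mem_ball, dist_eq_norm, sub_zero]; exact hz
    have hc := hd.circleIntegral_sub_inv_smul hz'
    have hfun : (fun u : ℂ => Complex.exp (u * cc) / (u - z) ^ (0 + 1)) =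
        (fun u : ℂ => (u - z)⁻¹ • Complex.exp (u * cc)) := by
      funext u
      rw [pow_one, smul_eq_mul, div_eq_inv_mul]
    calc (∮ u in C(0, r), Complex.exp (u * cc) / (u - z) ^ (0 + 1))
        = (∮ u in C(0, r), (u - z)⁻¹ • Complex.exp (u * cc)) :=
          congrFun (congrFun (congrArg circleIntegral hfun) 0) r
      _ = (2 * Real.pi * Complex.I : ℂ) • Complex.exp (z * cc) := hc
      _ = (2 * Real.pi * Complex.I) * (cc ^ 0 * Complex.exp (z * cc) / ((0:ℕ).factorial : ℂ)) := by
          simp [smul_eq_mul]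
  | succ M ihM =>
    intro z hz
    set ε : ℝ := (r - ‖z‖) / 2 with hε'
    have hε : 0 < ε := by simp only [hε']; linarith [norm_nonneg z, hz]
    set g : ℝ → ℂ := fun θ => deriv (circleMap 0 r) θ * Complex.exp (circleMap 0 r θ * cc)
      with hg'
    set w : ℝ → ℂ := fun θ => circleMap 0 r θ with hw'
    have hgalt : g = fun θ => (circleMap 0 r θ * Complex.I) *
        Complex.exp (circleMap 0 r θ * cc) := by
      funext θ
      rw [hg']
      simp only [deriv_circleMap]
    have hgc : ContinuousOn g (Set.uIcc 0 (2 * Real.pi)) := by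
      rw [hgalt]
      exact (((continuous_circleMap 0 r).mul continuous_const).mul
        (((continuous_circleMap 0 r).mul continuous_const).cexp)).continuousOn
    have hwc : ContinuousOn w (Set.uIcc 0 (2 * Real.pi)) := (continuous_circleMap 0 r).continuousOn
    have hnormw : ∀ θ : ℝ, ‖circleMap 0 r θ‖ = r := by
      intro θ
      have := norm_circleMap_zero r θ
      rw [this, abs_of_pos hr]
    have hG : ∀ θ ∈ Set.uIcc (0:ℝ) (2 * Real.pi), ‖g θ‖ ≤ r * Real.exp (r * ‖cc‖) := by
      intro θ _
      rw [hgalt]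
      simp only [norm_mul, Complex.norm_I, hnormw, mul_one]
      have hee : ‖Complex.exp (circleMap 0 r θ * cc)‖ ≤ Real.exp (r * ‖cc‖) := by
        rw [Complex.norm_exp]
        apply Real.exp_le_exp.2
        calc (circleMap 0 r θ * cc).re ≤ ‖circleMap 0 r θ * cc‖ := Complex.re_le_norm _
          _ = r * ‖cc‖ := by rw [norm_mul, hnormw]
      exact mul_le_mul_of_nonneg_left hee hr.le
    have hlow : ∀ θ ∈ Set.uIcc (0:ℝ) (2 * Real.pi), ∀ z' ∈ Metric.ball z ε,
        ε ≤ ‖w θ - (1:ℂ) * z'‖ := by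
      intro θ _ z' hz'
      rw [one_mul]
      have h1 : ‖z'‖ ≤ ‖z‖ + ε := norm_lt_of_ball hz'
      have h2 : ‖w θ‖ = r := hnormw θ
      have h3 := norm_sub_norm_le (w θ) z'
      simp only [hε'] at h1 ⊢
      linarith [h3, h2 ▸ h3]
    have hD := hasDerivAt_param 0 (2 * Real.pi) g w (fun _ => (1:ℂ)) (M + 1) z ε ε
      (r * Real.exp (r * ‖cc‖)) 1 hε hε zero_le_one (by positivity)
      hgc hwc continuousOn_const hG (fun θ _ => by simp) hlow
    have hball_r : ∀ z' ∈ Metric.ball z ε, ‖z'‖ < r := by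
      intro z' hz'
      have := norm_lt_of_ball hz'
      simp only [hε'] at this
      linarith
    have hIK : (fun z' => ∫ θ in (0:ℝ)..(2 * Real.pi), g θ / (w θ - (fun _ => (1:ℂ)) θ * z') ^ (M + 1))
        =ᶠ[nhds z] (fun z' => ((2 * Real.pi * Complex.I) * cc ^ M / (M.factorial : ℂ)) *
          Complex.exp (z' * cc)) := by
      filter_upwards [Metric.ball_mem_nhds z hε] with z' hz'
      have h1 := (hunfold (M + 1) z').symm.trans (ihM z' (hball_r z' hz'))
      have h2 : (2 * Real.pi * Complex.I) * (cc ^ M * Complex.exp (z' * cc) / (M.factorial : ℂ))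
          = ((2 * Real.pi * Complex.I) * cc ^ M / (M.factorial : ℂ)) * Complex.exp (z' * cc) := by
        ring
      exact h1.trans h2
    have hexp : HasDerivAt (fun z' : ℂ => Complex.exp (z' * cc))
        (Complex.exp (z * cc) * cc) z := by
      simpa using ((hasDerivAt_id z).mul_const cc).cexp
    have hK0 := hexp.const_mul ((2 * Real.pi * Complex.I) * cc ^ M / (M.factorial : ℂ))
    have hK2 : HasDerivAt (fun z' => ((2 * Real.pi * Complex.I) * cc ^ M / (M.factorial : ℂ)) *
        Complex.exp (z' * cc))
        (∫ θ in (0:ℝ)..(2 * Real.pi), g θ * (((M + 1 : ℕ) : ℂ) * (fun _ => (1:ℂ)) θ) /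
          (w θ - (fun _ => (1:ℂ)) θ * z) ^ (M + 1 + 1)) z :=
      hD.congr_of_eventuallyEq hIK.symm
    have huniq := hK2.unique hK0
    have hDsplit : (∫ θ in (0:ℝ)..(2 * Real.pi), g θ * (((M + 1 : ℕ) : ℂ) * (fun _ => (1:ℂ)) θ) /
        (w θ - (fun _ => (1:ℂ)) θ * z) ^ (M + 1 + 1)) = ((M + 1 : ℕ) : ℂ) *
        ∫ θ in (0:ℝ)..(2 * Real.pi), g θ / (w θ - (1:ℂ) * z) ^ (M + 1 + 1) := by
      rw [← intervalIntegral.integral_const_mul]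
      apply intervalIntegral.integral_congr
      intro θ _
      show g θ * (((M + 1 : ℕ) : ℂ) * (1:ℂ)) / (w θ - (1:ℂ) * z) ^ (M + 1 + 1) =
        ((M + 1 : ℕ) : ℂ) * (g θ / (w θ - (1:ℂ) * z) ^ (M + 1 + 1))
      ring
    rw [hDsplit] at huniq
    have hM1ne : ((M + 1 : ℕ) : ℂ) ≠ 0 := Nat.cast_ne_zero.2 (by omega)
    have hMfacne : ((M.factorial : ℕ) : ℂ) ≠ 0 := Nat.cast_ne_zero.2 M.factorial_ne_zero
    have efact : (((M + 1).factorial : ℕ) : ℂ) = ((M + 1 : ℕ) : ℂ) * ((M.factorial : ℕ) : ℂ) := by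
      rw [Nat.factorial_succ]
      push_cast
      ring
    rw [hunfold (M + 1 + 1) z]
    apply mul_left_cancel₀ hM1ne
    rw [huniq, efact]
    have hM1ne' : ((M:ℂ) + 1) ≠ 0 := by exact_mod_cast hM1ne
    push_cast
    field_simp [hM1ne']
    ring

lemma integral_integral_swap_cont (a b c d : ℝ) (hab : a ≤ b) (hcd : c ≤ d) (F : ℝ → ℝ → ℂ)
    (hF : ContinuousOn (fun p : ℝ × ℝ => F p.1 p.2) (Set.Icc a b ×ˢ Set.Icc c d)) :
    ∫ x in a..b, ∫ y in c..d, F x y = ∫ y in c..d, ∫ x in a..b, F x y := by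
  rw [intervalIntegral.integral_of_le hab, intervalIntegral.integral_of_le hcd]
  have e1 : ∀ x : ℝ, (∫ y in c..d, F x y) = ∫ y in Set.Ioc c d, F x y :=
    fun x => intervalIntegral.integral_of_le hcd
  have e2 : ∀ y : ℝ, (∫ x in a..b, F x y) = ∫ x in Set.Ioc a b, F x y :=
    fun y => intervalIntegral.integral_of_le hab
  simp_rw [e1, e2]
  have hInt : IntegrableOn (fun p : ℝ × ℝ => F p.1 p.2) (Set.Ioc a b ×ˢ Set.Ioc c d) volume :=
    (hF.integrableOn_compact (isCompact_Icc.prod isCompact_Icc)).mono_set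
      (Set.prod_mono Set.Ioc_subset_Icc_self Set.Ioc_subset_Icc_self)
  have hInt2 : Integrable (Function.uncurry F)
      ((volume.restrict (Set.Ioc a b)).prod (volume.restrict (Set.Ioc c d))) := by
    rw [Measure.prod_restrict]
    have : (volume : Measure (ℝ × ℝ)) = (volume : Measure ℝ).prod (volume : Measure ℝ) :=
      Measure.volume_eq_prod ℝ ℝ
    rw [← this]
    exact hInt
  exact MeasureTheory.integral_integral_swap hInt2

lemma conv_norm_lt {r : ℝ} (z₁ z₂ : ℂ) (h1 : ‖z₁‖ < r) (h2 : ‖z₂‖ < r)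
    (t : ℝ) (ht0 : 0 ≤ t) (ht1 : t ≤ 1) : ‖(t : ℂ) * z₁ + (1 - (t : ℂ)) * z₂‖ < r := by
  set ρ : ℝ := max ‖z₁‖ ‖z₂‖ with hρ
  have hρr : ρ < r := max_lt h1 h2
  have e1 : ‖(t : ℂ)‖ = t := by rw [Complex.norm_real, Real.norm_of_nonneg ht0]
  have e2 : ‖(1 : ℂ) - (t : ℂ)‖ = 1 - t := by
    rw [show (1 : ℂ) - (t : ℂ) = ((1 - t : ℝ) : ℂ) by push_cast; ring,
      Complex.norm_real, Real.norm_of_nonneg (by linarith)]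
  calc ‖(t : ℂ) * z₁ + (1 - (t : ℂ)) * z₂‖ ≤ ‖(t : ℂ) * z₁‖ + ‖(1 - (t : ℂ)) * z₂‖ :=
        norm_add_le _ _
    _ = t * ‖z₁‖ + (1 - t) * ‖z₂‖ := by rw [norm_mul, norm_mul, e1, e2]
    _ ≤ t * ρ + (1 - t) * ρ := by
        have a1 := mul_le_mul_of_nonneg_left (le_max_left ‖z₁‖ ‖z₂‖) ht0
        have a2 := mul_le_mul_of_nonneg_left (le_max_right ‖z₁‖ ‖z₂‖)
          (by linarith : (0:ℝ) ≤ 1 - t)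
        linarith
    _ = ρ := by ring
    _ < r := hρr

lemma simplex_to_iterated (f : ℝ × ℝ → ℂ) (hf : Continuous f) :
    (∫ p in {p : ℝ × ℝ | 0 ≤ p.1 ∧ 0 ≤ p.2 ∧ p.1 + p.2 ≤ 1}, f p) =
      ∫ a in (0:ℝ)..1, ∫ b in (0:ℝ)..(1 - a), f (a, b) := by
  set Δ : Set (ℝ × ℝ) := {p : ℝ × ℝ | 0 ≤ p.1 ∧ 0 ≤ p.2 ∧ p.1 + p.2 ≤ 1} with hΔ'
  have hclosed : IsClosed Δ := by
    have h1 : IsClosed {p : ℝ × ℝ | 0 ≤ p.1} := isClosed_le continuous_const continuous_fst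
    have h2 : IsClosed {p : ℝ × ℝ | 0 ≤ p.2} := isClosed_le continuous_const continuous_snd
    have h3 : IsClosed {p : ℝ × ℝ | p.1 + p.2 ≤ 1} :=
      isClosed_le (continuous_fst.add continuous_snd) continuous_const
    have : Δ = {p : ℝ × ℝ | 0 ≤ p.1} ∩ ({p : ℝ × ℝ | 0 ≤ p.2} ∩ {p : ℝ × ℝ | p.1 + p.2 ≤ 1}) := by
      ext p
      simp [hΔ', Set.mem_setOf_eq, and_assoc]
    rw [this]
    exact h1.inter (h2.inter h3)
  have hmeas : MeasurableSet Δ := hclosed.measurableSet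
  have hcomp : IsCompact Δ := by
    refine IsCompact.of_isClosed_subset (isCompact_Icc (a := ((0:ℝ), (0:ℝ))) (b := (1, 1)))
      hclosed ?_
    intro p hp
    rcases hp with ⟨h1, h2, h3⟩
    simp only [Set.mem_Icc, Prod.le_def]
    exact ⟨⟨h1, h2⟩, ⟨by linarith, by linarith⟩⟩
  have hIntOn : IntegrableOn f Δ := hf.continuousOn.integrableOn_compact hcomp
  rw [← MeasureTheory.integral_indicator hmeas]
  have hI2 : Integrable (Δ.indicator f) ((volume : Measure ℝ).prod volume) := by
    rw [← Measure.volume_eq_prod ℝ ℝ]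
    rwa [MeasureTheory.integrable_indicator_iff hmeas]
  have hvol : (∫ p, Δ.indicator f p) = ∫ p, Δ.indicator f p ∂((volume : Measure ℝ).prod volume) := by
    rw [← Measure.volume_eq_prod ℝ ℝ]
  rw [hvol, MeasureTheory.integral_prod _ hI2]
  have inner : ∀ a : ℝ, (∫ b, Δ.indicator f (a, b)) =
      Set.indicator (Set.Icc (0:ℝ) 1) (fun a => ∫ b in (0:ℝ)..(1 - a), f (a, b)) a := by
    intro a
    by_cases ha : a ∈ Set.Icc (0:ℝ) 1
    · rw [Set.indicator_of_mem ha]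
      have hb : ∀ b : ℝ, Δ.indicator f (a, b) =
          (Set.Icc (0:ℝ) (1 - a)).indicator (fun b => f (a, b)) b := by
        intro b
        by_cases hbmem : b ∈ Set.Icc (0:ℝ) (1 - a)
        · rw [Set.indicator_of_mem hbmem, Set.indicator_of_mem]
          exact ⟨ha.1, hbmem.1, by linarith [hbmem.2]⟩
        · rw [Set.indicator_of_notMem hbmem, Set.indicator_of_notMem]
          intro hmem
          rcases hmem with ⟨hm1, hm2, hm3⟩
          exact hbmem ⟨hm2, by linarith⟩
      simp_rw [hb]
      rw [MeasureTheory.integral_indicator measurableSet_Icc, integral_Icc_eq_integral_Ioc,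
        ← intervalIntegral.integral_of_le (by linarith [ha.2] : (0:ℝ) ≤ 1 - a)]
    · rw [Set.indicator_of_notMem ha]
      have hb : ∀ b : ℝ, Δ.indicator f (a, b) = 0 := by
        intro b
        apply Set.indicator_of_notMem
        intro hmem
        rcases hmem with ⟨hm1, hm2, hm3⟩
        simp only [Set.mem_Icc, not_and_or, not_le] at ha
        rcases ha with ha | ha
        · linarith
        · linarith
      simp_rw [hb]
      simp
  simp_rw [inner]
  rw [MeasureTheory.integral_indicator measurableSet_Icc, integral_Icc_eq_integral_Ioc,
    ← intervalIntegral.integral_of_le (zero_le_one)]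

set_option maxHeartbeats 2000000 in
lemma circle_side (r : ℝ) (hr : 0 < r) (L α β : ℂ) (hα : ‖α‖ < r) (hβ : ‖β‖ < r)
    (m' n' k : ℕ) :
    (∮ u in C(0, r),
        Complex.exp (u * L) / ((α + u) ^ (m' + 1) * (u - β) ^ (n' + 1) * u ^ (k + 1)))
      = (2 * Real.pi * Complex.I) * (L ^ (m' + n' + k + 2) /
          ((k.factorial : ℂ) * (m'.factorial : ℂ) * (n'.factorial : ℂ))) *
        ∫ s in (0:ℝ)..1, ∫ t in (0:ℝ)..1,
          ((s : ℂ) ^ n' * (1 - (s : ℂ)) ^ k * (t : ℂ) ^ m' * (1 - (t : ℂ)) ^ (n' + k + 1)) *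
            Complex.exp (((t : ℂ) * (-α) + (1 - (t : ℂ)) * ((s : ℂ) * β)) * L) := by
  have h2π : (0:ℝ) ≤ 2 * Real.pi := by positivity
  have h01 : (0:ℝ) ≤ 1 := zero_le_one
  have hnorm : ∀ θ : ℝ, ‖circleMap 0 r θ‖ = r := by
    intro θ
    rw [norm_circleMap_zero, abs_of_pos hr]
  have hrleθ : ∀ θ : ℝ, r ≤ ‖circleMap 0 r θ‖ := fun θ => (hnorm θ).ge
  have hβ0 : ‖(0:ℂ)‖ < r := by simpa using hr
  have hαneg : ‖-α‖ < r := by rwa [norm_neg]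
  have hsnorm : ∀ s : ℝ, s ∈ Set.Icc (0:ℝ) 1 → ‖(s:ℂ) * β‖ < r := by
    intro s hs
    rw [norm_mul, Complex.norm_real, Real.norm_of_nonneg hs.1]
    calc s * ‖β‖ ≤ 1 * ‖β‖ := mul_le_mul_of_nonneg_right hs.2 (norm_nonneg β)
      _ = ‖β‖ := one_mul _
      _ < r := hβ
  have hXne : ∀ θ : ℝ, α + circleMap 0 r θ ≠ 0 := by
    intro θ h0
    have h1 : α = -circleMap 0 r θ := by linear_combination h0
    rw [h1, norm_neg, hnorm θ] at hα
    exact lt_irrefl r hα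
  have hcmne : ∀ θ : ℝ, circleMap 0 r θ ≠ 0 := by
    intro θ h0
    have := hnorm θ
    rw [h0, norm_zero] at this
    linarith
  have hcmβ : ∀ θ : ℝ, circleMap 0 r θ - β ≠ 0 := by
    intro θ h0
    have h1 : circleMap 0 r θ = β := by linear_combination h0
    have h2 := hnorm θ
    rw [h1] at h2
    linarith [hβ, h2.ge, h2.le]
  have hXne' : ∀ θ : ℝ, circleMap 0 r θ - -α ≠ 0 := by
    intro θ h0
    apply hXne θ
    linear_combination h0
  have hd1ne : ∀ (θ s : ℝ), s ∈ Set.Icc (0:ℝ) 1 →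
      (circleMap 0 r θ - (s:ℂ) * β) - (1 - (s:ℂ)) * 0 ≠ 0 := by
    intro θ s hs h0
    have := conv_lower (circleMap 0 r θ) β 0 ‖β‖ le_rfl (by simp) s hs.1 hs.2
    rw [h0, norm_zero, hnorm θ] at this
    linarith
  have hd2ne : ∀ (θ s t : ℝ), s ∈ Set.Icc (0:ℝ) 1 → t ∈ Set.Icc (0:ℝ) 1 →
      (circleMap 0 r θ - (t:ℂ) * (-α)) - (1 - (t:ℂ)) * ((s:ℂ) * β) ≠ 0 := by
    intro θ s t hs ht h0
    have hb1 : ‖-α‖ ≤ max ‖α‖ ‖β‖ := by rw [norm_neg]; exact le_max_left _ _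
    have := conv_lower (circleMap 0 r θ) (-α) ((s:ℂ) * β) (max ‖α‖ ‖β‖) hb1
      (by
        rw [norm_mul, Complex.norm_real, Real.norm_of_nonneg hs.1]
        calc s * ‖β‖ ≤ 1 * ‖β‖ := mul_le_mul_of_nonneg_right hs.2 (norm_nonneg β)
          _ = ‖β‖ := one_mul _
          _ ≤ max ‖α‖ ‖β‖ := le_max_right _ _) t ht.1 ht.2
    rw [h0, norm_zero, hnorm θ] at this
    have : r ≤ max ‖α‖ ‖β‖ := by linarith
    have h2 := max_lt hα hβ
    linarith
  have hgc : Continuous (fun θ : ℝ => circleMap 0 r θ * Complex.I *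
      Complex.exp (circleMap 0 r θ * L)) :=
    ((continuous_circleMap 0 r).mul continuous_const).mul
      (((continuous_circleMap 0 r).mul continuous_const).cexp)
  set g : ℝ → ℂ := fun θ => circleMap 0 r θ * Complex.I * Complex.exp (circleMap 0 r θ * L)
    with hg'
  set c1 : ℂ := ((n' + k + 1).factorial : ℂ) / ((n'.factorial : ℂ) * (k.factorial : ℂ)) with hc1'
  set c2 : ℂ := ((m' + (n' + k + 1) + 1).factorial : ℂ) /
    ((m'.factorial : ℂ) * (((n' + k + 1).factorial : ℂ))) with hc2'
  set P : ℝ → ℝ → ℂ := fun θ s => ((s:ℂ) ^ n' * (1 - (s:ℂ)) ^ k) * g θ /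
    ((α + circleMap 0 r θ) ^ (m' + 1) *
      ((circleMap 0 r θ - (s:ℂ) * β) - (1 - (s:ℂ)) * 0) ^ (n' + k + 2)) with hP'
  set Q : ℝ → ℝ → ℝ → ℂ := fun θ s t =>
    ((s:ℂ) ^ n' * (1 - (s:ℂ)) ^ k) * ((t:ℂ) ^ m' * (1 - (t:ℂ)) ^ (n' + k + 1)) * g θ /
      ((circleMap 0 r θ - (t:ℂ) * (-α)) - (1 - (t:ℂ)) * ((s:ℂ) * β)) ^ (m' + (n' + k + 1) + 2)
    with hQ'
  -- Step 0 : unfold the circle integral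
  have step0 : (∮ u in C(0, r),
      Complex.exp (u * L) / ((α + u) ^ (m' + 1) * (u - β) ^ (n' + 1) * u ^ (k + 1)))
      = ∫ θ in (0:ℝ)..(2 * Real.pi), g θ / ((α + circleMap 0 r θ) ^ (m' + 1) *
          (circleMap 0 r θ - β) ^ (n' + 1) * (circleMap 0 r θ) ^ (k + 1)) := by
    simp only [circleIntegral, deriv_circleMap, smul_eq_mul]
    apply intervalIntegral.integral_congr
    intro θ _
    simp only [hg']
    ring
  -- Step 1 : first merge (β and 0)
  have step1 : (∫ θ in (0:ℝ)..(2 * Real.pi), g θ / ((α + circleMap 0 r θ) ^ (m' + 1) *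
        (circleMap 0 r θ - β) ^ (n' + 1) * (circleMap 0 r θ) ^ (k + 1)))
      = c1 * ∫ θ in (0:ℝ)..(2 * Real.pi), ∫ s in (0:ℝ)..1, P θ s := by
    rw [← intervalIntegral.integral_const_mul]
    apply intervalIntegral.integral_congr
    intro θ _
    have h1 := lemA r hr (circleMap 0 r θ) (hrleθ θ) n' k β 0 hβ hβ0
    unfold lemA_stmt at h1
    simp only [hP']
    calc g θ / ((α + circleMap 0 r θ) ^ (m' + 1) *
          (circleMap 0 r θ - β) ^ (n' + 1) * (circleMap 0 r θ) ^ (k + 1))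
        = (g θ / (α + circleMap 0 r θ) ^ (m' + 1)) *
            (1 / ((circleMap 0 r θ - β) ^ (n' + 1) * (circleMap 0 r θ - 0) ^ (k + 1))) := by
          rw [sub_zero]
          field_simp
      _ = (g θ / (α + circleMap 0 r θ) ^ (m' + 1)) * (c1 * ∫ s in (0:ℝ)..1,
            ((s:ℂ) ^ n' * (1 - (s:ℂ)) ^ k) /
              ((circleMap 0 r θ - (s:ℂ) * β) - (1 - (s:ℂ)) * 0) ^ (n' + k + 2)) := by
          rw [h1, hc1']
      _ = c1 * ∫ s in (0:ℝ)..1, P θ s := by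
          rw [show (g θ / (α + circleMap 0 r θ) ^ (m' + 1)) * (c1 * ∫ s in (0:ℝ)..1,
              ((s:ℂ) ^ n' * (1 - (s:ℂ)) ^ k) /
                ((circleMap 0 r θ - (s:ℂ) * β) - (1 - (s:ℂ)) * 0) ^ (n' + k + 2)) =
              c1 * ((g θ / (α + circleMap 0 r θ) ^ (m' + 1)) * ∫ s in (0:ℝ)..1,
              ((s:ℂ) ^ n' * (1 - (s:ℂ)) ^ k) /
                ((circleMap 0 r θ - (s:ℂ) * β) - (1 - (s:ℂ)) * 0) ^ (n' + k + 2)) from by ring,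
            ← intervalIntegral.integral_const_mul]
          congr 1
          apply intervalIntegral.integral_congr
          intro s hs2
          have hsIcc2 : s ∈ Set.Icc (0:ℝ) 1 := by rwa [Set.uIcc_of_le h01] at hs2
          simp only [hP']
          rw [div_mul_div_comm, mul_comm (g θ)]
  -- Step 2 : swap θ and s
  have hPcont : ContinuousOn (fun p : ℝ × ℝ => P p.1 p.2)
      (Set.Icc 0 (2 * Real.pi) ×ˢ Set.Icc 0 1) := by
    simp only [hP', hg']
    apply ContinuousOn.div
    · apply Continuous.continuousOn
      fun_prop
    · apply Continuous.continuousOn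
      fun_prop
    · intro p hp
      exact mul_ne_zero (pow_ne_zero _ (hXne p.1)) (pow_ne_zero _ (hd1ne p.1 p.2 hp.2))
  have step2 : (∫ θ in (0:ℝ)..(2 * Real.pi), ∫ s in (0:ℝ)..1, P θ s)
      = ∫ s in (0:ℝ)..1, ∫ θ in (0:ℝ)..(2 * Real.pi), P θ s :=
    integral_integral_swap_cont 0 (2 * Real.pi) 0 1 h2π h01 P hPcont
  have hQcont : ∀ s : ℝ, s ∈ Set.Icc (0:ℝ) 1 → ContinuousOn
      (fun p : ℝ × ℝ => Q p.1 s p.2) (Set.Icc 0 (2 * Real.pi) ×ˢ Set.Icc 0 1) := by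
    intro s hsIcc
    simp only [hQ', hg']
    apply ContinuousOn.div
    · apply Continuous.continuousOn
      fun_prop
    · apply Continuous.continuousOn
      fun_prop
    · intro p hp
      exact pow_ne_zero _ (hd2ne p.1 s p.2 hsIcc hp.2)
  -- Step 3 : second merge (-α with sβ), then swap θ and t
  have step3 : (∫ s in (0:ℝ)..1, ∫ θ in (0:ℝ)..(2 * Real.pi), P θ s)
      = ∫ s in (0:ℝ)..1, c2 * ∫ t in (0:ℝ)..1, ∫ θ in (0:ℝ)..(2 * Real.pi), Q θ s t := by
    apply intervalIntegral.integral_congr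
    intro s hs
    have hsIcc : s ∈ Set.Icc (0:ℝ) 1 := by rwa [Set.uIcc_of_le h01] at hs
    have hptθ : ∀ θ : ℝ, P θ s = c2 * ∫ t in (0:ℝ)..1, Q θ s t := by
      intro θ
      have h2 := lemA r hr (circleMap 0 r θ) (hrleθ θ) m' (n' + k + 1) (-α) ((s:ℂ) * β)
        hαneg (hsnorm s hsIcc)
      unfold lemA_stmt at h2
      calc P θ s
          = (((s:ℂ) ^ n' * (1 - (s:ℂ)) ^ k) * g θ) *
              (1 / ((circleMap 0 r θ - -α) ^ (m' + 1) *
                (circleMap 0 r θ - (s:ℂ) * β) ^ ((n' + k + 1) + 1))) := by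
            simp only [hP']
            have e0 : (circleMap 0 r θ - (s:ℂ) * β) - (1 - (s:ℂ)) * 0
                = circleMap 0 r θ - (s:ℂ) * β := by ring
            have e1 : circleMap 0 r θ - -α = α + circleMap 0 r θ := by ring
            rw [e0, e1, show (n' + k + 1) + 1 = n' + k + 2 by omega, mul_one_div]
        _ = (((s:ℂ) ^ n' * (1 - (s:ℂ)) ^ k) * g θ) *
              (c2 * ∫ t in (0:ℝ)..1, ((t:ℂ) ^ m' * (1 - (t:ℂ)) ^ (n' + k + 1)) /
                ((circleMap 0 r θ - (t:ℂ) * (-α)) -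
                  (1 - (t:ℂ)) * ((s:ℂ) * β)) ^ (m' + (n' + k + 1) + 2)) := by
            rw [h2, hc2']
        _ = c2 * ∫ t in (0:ℝ)..1, Q θ s t := by
            rw [show (((s:ℂ) ^ n' * (1 - (s:ℂ)) ^ k) * g θ) *
                (c2 * ∫ t in (0:ℝ)..1, ((t:ℂ) ^ m' * (1 - (t:ℂ)) ^ (n' + k + 1)) /
                  ((circleMap 0 r θ - (t:ℂ) * (-α)) -
                    (1 - (t:ℂ)) * ((s:ℂ) * β)) ^ (m' + (n' + k + 1) + 2)) =
                c2 * ((((s:ℂ) ^ n' * (1 - (s:ℂ)) ^ k) * g θ) *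
                ∫ t in (0:ℝ)..1, ((t:ℂ) ^ m' * (1 - (t:ℂ)) ^ (n' + k + 1)) /
                  ((circleMap 0 r θ - (t:ℂ) * (-α)) -
                    (1 - (t:ℂ)) * ((s:ℂ) * β)) ^ (m' + (n' + k + 1) + 2)) from by ring,
              ← intervalIntegral.integral_const_mul]
            congr 1
            apply intervalIntegral.integral_congr
            intro t _
            simp only [hQ']
            rw [mul_div_assoc']
            congr 1
            ring
    calc (∫ θ in (0:ℝ)..(2 * Real.pi), P θ s)
        = ∫ θ in (0:ℝ)..(2 * Real.pi), c2 * ∫ t in (0:ℝ)..1, Q θ s t := by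
          apply intervalIntegral.integral_congr
          intro θ _
          exact hptθ θ
      _ = c2 * ∫ θ in (0:ℝ)..(2 * Real.pi), ∫ t in (0:ℝ)..1, Q θ s t :=
          intervalIntegral.integral_const_mul _ _
      _ = c2 * ∫ t in (0:ℝ)..1, ∫ θ in (0:ℝ)..(2 * Real.pi), Q θ s t := by
          rw [integral_integral_swap_cont 0 (2 * Real.pi) 0 1 h2π h01
            (fun θ t => Q θ s t) (hQcont s hsIcc)]
  -- Step 4 : evaluate the inner circle integral via the Cauchy formula
  have step4 : (∫ s in (0:ℝ)..1, c2 * ∫ t in (0:ℝ)..1, ∫ θ in (0:ℝ)..(2 * Real.pi), Q θ s t)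
      = ∫ s in (0:ℝ)..1, c2 * ∫ t in (0:ℝ)..1,
          (((s:ℂ) ^ n' * (1 - (s:ℂ)) ^ k) * ((t:ℂ) ^ m' * (1 - (t:ℂ)) ^ (n' + k + 1))) *
            ((2 * Real.pi * Complex.I) * (L ^ (m' + (n' + k + 1) + 1) *
              Complex.exp (((t:ℂ) * (-α) + (1 - (t:ℂ)) * ((s:ℂ) * β)) * L) /
                (((m' + (n' + k + 1) + 1).factorial : ℂ)))) := by
    apply intervalIntegral.integral_congr
    intro s hs
    have hsIcc : s ∈ Set.Icc (0:ℝ) 1 := by rwa [Set.uIcc_of_le h01] at hs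
    dsimp only
    congr 1
    apply intervalIntegral.integral_congr
    intro t ht
    have htIcc : t ∈ Set.Icc (0:ℝ) 1 := by rwa [Set.uIcc_of_le h01] at ht
    have hζ : ‖(t:ℂ) * (-α) + (1 - (t:ℂ)) * ((s:ℂ) * β)‖ < r :=
      conv_norm_lt (-α) ((s:ℂ) * β) hαneg (hsnorm s hsIcc) t htIcc.1 htIcc.2
    have hcp := cauchy_pow r hr L (m' + (n' + k + 1) + 1)
      ((t:ℂ) * (-α) + (1 - (t:ℂ)) * ((s:ℂ) * β)) hζ
    have refold : (∫ θ in (0:ℝ)..(2 * Real.pi), g θ /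
        ((circleMap 0 r θ - (t:ℂ) * (-α)) -
          (1 - (t:ℂ)) * ((s:ℂ) * β)) ^ (m' + (n' + k + 1) + 2))
        = ∮ u in C(0, r), Complex.exp (u * L) /
            (u - ((t:ℂ) * (-α) + (1 - (t:ℂ)) * ((s:ℂ) * β))) ^ ((m' + (n' + k + 1) + 1) + 1) := by
      simp only [circleIntegral, deriv_circleMap, smul_eq_mul]
      apply intervalIntegral.integral_congr
      intro θ _
      simp only [hg']
      ring
    calc (∫ θ in (0:ℝ)..(2 * Real.pi), Q θ s t)
        = (((s:ℂ) ^ n' * (1 - (s:ℂ)) ^ k) * ((t:ℂ) ^ m' * (1 - (t:ℂ)) ^ (n' + k + 1))) *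
            ∫ θ in (0:ℝ)..(2 * Real.pi), g θ /
              ((circleMap 0 r θ - (t:ℂ) * (-α)) -
                (1 - (t:ℂ)) * ((s:ℂ) * β)) ^ (m' + (n' + k + 1) + 2) := by
          rw [← intervalIntegral.integral_const_mul]
          apply intervalIntegral.integral_congr
          intro θ _
          simp only [hQ']
          rw [mul_div_assoc]
      _ = (((s:ℂ) ^ n' * (1 - (s:ℂ)) ^ k) * ((t:ℂ) ^ m' * (1 - (t:ℂ)) ^ (n' + k + 1))) *
            ((2 * Real.pi * Complex.I) * (L ^ (m' + (n' + k + 1) + 1) *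
              Complex.exp (((t:ℂ) * (-α) + (1 - (t:ℂ)) * ((s:ℂ) * β)) * L) /
                (((m' + (n' + k + 1) + 1).factorial : ℂ)))) := by
          rw [refold, hcp]
  -- Step 5 : pull out the constants and conclude
  have step5 : (∫ s in (0:ℝ)..1, c2 * ∫ t in (0:ℝ)..1,
        (((s:ℂ) ^ n' * (1 - (s:ℂ)) ^ k) * ((t:ℂ) ^ m' * (1 - (t:ℂ)) ^ (n' + k + 1))) *
          ((2 * Real.pi * Complex.I) * (L ^ (m' + (n' + k + 1) + 1) *
            Complex.exp (((t:ℂ) * (-α) + (1 - (t:ℂ)) * ((s:ℂ) * β)) * L) /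
              (((m' + (n' + k + 1) + 1).factorial : ℂ)))))
      = (c2 * ((2 * Real.pi * Complex.I) * (L ^ (m' + (n' + k + 1) + 1) /
          (((m' + (n' + k + 1) + 1).factorial : ℂ))))) *
        ∫ s in (0:ℝ)..1, ∫ t in (0:ℝ)..1,
          ((s : ℂ) ^ n' * (1 - (s : ℂ)) ^ k * (t : ℂ) ^ m' * (1 - (t : ℂ)) ^ (n' + k + 1)) *
            Complex.exp (((t : ℂ) * (-α) + (1 - (t : ℂ)) * ((s : ℂ) * β)) * L) := by
    rw [← intervalIntegral.integral_const_mul]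
    apply intervalIntegral.integral_congr
    intro s _
    dsimp only
    calc c2 * ∫ t in (0:ℝ)..1,
          (((s:ℂ) ^ n' * (1 - (s:ℂ)) ^ k) * ((t:ℂ) ^ m' * (1 - (t:ℂ)) ^ (n' + k + 1))) *
            ((2 * Real.pi * Complex.I) * (L ^ (m' + (n' + k + 1) + 1) *
              Complex.exp (((t:ℂ) * (-α) + (1 - (t:ℂ)) * ((s:ℂ) * β)) * L) /
                (((m' + (n' + k + 1) + 1).factorial : ℂ))))
        = c2 * (((2 * Real.pi * Complex.I) * (L ^ (m' + (n' + k + 1) + 1) /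
            (((m' + (n' + k + 1) + 1).factorial : ℂ)))) * ∫ t in (0:ℝ)..1,
            ((s : ℂ) ^ n' * (1 - (s : ℂ)) ^ k * (t : ℂ) ^ m' * (1 - (t : ℂ)) ^ (n' + k + 1)) *
              Complex.exp (((t : ℂ) * (-α) + (1 - (t : ℂ)) * ((s : ℂ) * β)) * L)) := by
          congr 1
          rw [← intervalIntegral.integral_const_mul]
          apply intervalIntegral.integral_congr
          intro t _
          dsimp only
          ring
      _ = (c2 * ((2 * Real.pi * Complex.I) * (L ^ (m' + (n' + k + 1) + 1) /
            (((m' + (n' + k + 1) + 1).factorial : ℂ))))) * ∫ t in (0:ℝ)..1,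
            ((s : ℂ) ^ n' * (1 - (s : ℂ)) ^ k * (t : ℂ) ^ m' * (1 - (t : ℂ)) ^ (n' + k + 1)) *
              Complex.exp (((t : ℂ) * (-α) + (1 - (t : ℂ)) * ((s : ℂ) * β)) * L) := by
          ring
  rw [step0, step1, step2, step3, step4, step5]
  rw [show m' + (n' + k + 1) + 1 = m' + n' + k + 2 from by omega]
  rw [show c1 * ((c2 * ((2 * Real.pi * Complex.I) * (L ^ (m' + n' + k + 2) /
        (((m' + n' + k + 2).factorial : ℂ))))) * ∫ s in (0:ℝ)..1, ∫ t in (0:ℝ)..1,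
          ((s : ℂ) ^ n' * (1 - (s : ℂ)) ^ k * (t : ℂ) ^ m' * (1 - (t : ℂ)) ^ (n' + k + 1)) *
            Complex.exp (((t : ℂ) * (-α) + (1 - (t : ℂ)) * ((s : ℂ) * β)) * L)) =
      (c1 * c2 * ((2 * Real.pi * Complex.I) * (L ^ (m' + n' + k + 2) /
        (((m' + n' + k + 2).factorial : ℂ))))) * ∫ s in (0:ℝ)..1, ∫ t in (0:ℝ)..1,
          ((s : ℂ) ^ n' * (1 - (s : ℂ)) ^ k * (t : ℂ) ^ m' * (1 - (t : ℂ)) ^ (n' + k + 1)) *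
            Complex.exp (((t : ℂ) * (-α) + (1 - (t : ℂ)) * ((s : ℂ) * β)) * L) from by ring]
  congr 1
  rw [hc1', hc2', show m' + (n' + k + 1) + 1 = m' + n' + k + 2 from by omega]
  have f1 : ((n' + k + 1).factorial : ℂ) ≠ 0 := Nat.cast_ne_zero.2 (Nat.factorial_ne_zero _)
  have f2 : ((m' + n' + k + 2).factorial : ℂ) ≠ 0 := Nat.cast_ne_zero.2 (Nat.factorial_ne_zero _)
  have f3 : (n'.factorial : ℂ) ≠ 0 := Nat.cast_ne_zero.2 (Nat.factorial_ne_zero _)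
  have f4 : (k.factorial : ℂ) ≠ 0 := Nat.cast_ne_zero.2 (Nat.factorial_ne_zero _)
  have f5 : (m'.factorial : ℂ) ≠ 0 := Nat.cast_ne_zero.2 (Nat.factorial_ne_zero _)
  field_simp

lemma simplex_side (L α β : ℂ) (m' n' k : ℕ) :
    (∫ p in {p : ℝ × ℝ | 0 ≤ p.1 ∧ 0 ≤ p.2 ∧ p.1 + p.2 ≤ 1},
        (((1 - p.1 - p.2) ^ k * p.1 ^ m' * p.2 ^ n' : ℝ) : ℂ) *
          Complex.exp ((-(p.1 : ℂ) * α + (p.2 : ℂ) * β) * L))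
      = ∫ t in (0:ℝ)..1, ∫ s in (0:ℝ)..1,
          ((s : ℂ) ^ n' * (1 - (s : ℂ)) ^ k * (t : ℂ) ^ m' * (1 - (t : ℂ)) ^ (n' + k + 1)) *
            Complex.exp (((t : ℂ) * (-α) + (1 - (t : ℂ)) * ((s : ℂ) * β)) * L) := by
  have hf : Continuous (fun p : ℝ × ℝ => (((1 - p.1 - p.2) ^ k * p.1 ^ m' * p.2 ^ n' : ℝ) : ℂ) *
      Complex.exp ((-(p.1 : ℂ) * α + (p.2 : ℂ) * β) * L)) := by
    fun_prop
  rw [simplex_to_iterated _ hf]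
  apply intervalIntegral.integral_congr
  intro a _
  dsimp only
  have hsub := intervalIntegral.smul_integral_comp_mul_left
    (f := fun b : ℝ => (((1 - a - b) ^ k * a ^ m' * b ^ n' : ℝ) : ℂ) *
      Complex.exp ((-(a : ℂ) * α + (b : ℂ) * β) * L)) (a := (0:ℝ)) (b := (1:ℝ)) (1 - a)
  rw [mul_zero, mul_one] at hsub
  rw [← hsub, ← intervalIntegral.integral_smul]
  apply intervalIntegral.integral_congr
  intro s _
  dsimp only
  have hargs : (-(a:ℂ) * α + (((1 - a) * s : ℝ) : ℂ) * β) * L =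
      ((a : ℂ) * (-α) + (1 - (a:ℂ)) * ((s:ℂ) * β)) * L := by
    push_cast
    ring
  rw [Complex.real_smul, hargs]
  have e1 : (1 - a - (1 - a) * s : ℝ) ^ k = (1 - a) ^ k * (1 - s) ^ k := by
    rw [show (1 - a - (1 - a) * s : ℝ) = (1 - a) * (1 - s) by ring, mul_pow]
  have e2 : ((1 - a) * s : ℝ) ^ n' = (1 - a) ^ n' * s ^ n' := mul_pow _ _ _
  rw [e1, e2]
  push_cast
  ring

theorem circleIntegral_two_poles_eq_simplex_integral'
    (m n k : ℕ) (hm : 1 ≤ m) (hn : 1 ≤ n) (r q : ℝ) (hr : 0 < r) (hq : 0 < q)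
    (α β : ℂ) (hα : ‖α‖ < r) (hβ : ‖β‖ < r) :
    (1 / (2 * (Real.pi : ℂ) * Complex.I)) *
        (∮ u in C(0, r),
          Complex.exp (u * Real.log q) / ((α + u) ^ m * (u - β) ^ n * u ^ (k + 1)))
      = ((Real.log q ^ (k + m + n) /
            ((Nat.factorial k : ℝ) * (Nat.factorial (m - 1) : ℝ) * (Nat.factorial (n - 1) : ℝ)) : ℝ) : ℂ)
          * ∫ p in {p : ℝ × ℝ | 0 ≤ p.1 ∧ 0 ≤ p.2 ∧ p.1 + p.2 ≤ 1},
              (((1 - p.1 - p.2) ^ k * p.1 ^ (m - 1) * p.2 ^ (n - 1) : ℝ) : ℂ)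
                * Complex.exp ((-(p.1 : ℂ) * α + (p.2 : ℂ) * β) * Real.log q) := by
  obtain ⟨m', rfl⟩ : ∃ m', m = m' + 1 := ⟨m - 1, by omega⟩
  obtain ⟨n', rfl⟩ : ∃ n', n = n' + 1 := ⟨n - 1, by omega⟩
  simp only [Nat.add_sub_cancel]
  rw [circle_side r hr ((Real.log q : ℝ) : ℂ) α β hα hβ m' n' k,
    simplex_side ((Real.log q : ℝ) : ℂ) α β m' n' k]
  have hcont : ContinuousOn (fun p : ℝ × ℝ =>
      ((p.1 : ℂ) ^ n' * (1 - (p.1 : ℂ)) ^ k * (p.2 : ℂ) ^ m' * (1 - (p.2 : ℂ)) ^ (n' + k + 1)) *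
        Complex.exp (((p.2 : ℂ) * (-α) + (1 - (p.2 : ℂ)) * ((p.1 : ℂ) * β)) *
          ((Real.log q : ℝ) : ℂ))) (Set.Icc 0 1 ×ˢ Set.Icc 0 1) := by
    apply Continuous.continuousOn
    fun_prop
  have hswap := integral_integral_swap_cont 0 1 0 1 zero_le_one zero_le_one
    (fun s t => ((s : ℂ) ^ n' * (1 - (s : ℂ)) ^ k * (t : ℂ) ^ m' *
        (1 - (t : ℂ)) ^ (n' + k + 1)) *
      Complex.exp (((t : ℂ) * (-α) + (1 - (t : ℂ)) * ((s : ℂ) * β)) *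
        ((Real.log q : ℝ) : ℂ))) hcont
  rw [hswap]
  rw [show k + (m' + 1) + (n' + 1) = m' + n' + k + 2 from by omega]
  have h2πi : (2 * (Real.pi : ℂ) * Complex.I) ≠ 0 :=
    mul_ne_zero (mul_ne_zero two_ne_zero (Complex.ofReal_ne_zero.2 Real.pi_ne_zero))
      Complex.I_ne_zero
  have hcast : ((Real.log q ^ (m' + n' + k + 2) /
      ((Nat.factorial k : ℝ) * (Nat.factorial m' : ℝ) * (Nat.factorial n' : ℝ)) : ℝ) : ℂ)
      = ((Real.log q : ℝ) : ℂ) ^ (m' + n' + k + 2) /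
        ((Nat.factorial k : ℂ) * (Nat.factorial m' : ℂ) * (Nat.factorial n' : ℂ)) := by
    push_cast
    ring
  rw [hcast]
  rw [show (1 / (2 * (Real.pi : ℂ) * Complex.I)) *
      ((2 * Real.pi * Complex.I) * (((Real.log q : ℝ) : ℂ) ^ (m' + n' + k + 2) /
        ((Nat.factorial k : ℂ) * (Nat.factorial m' : ℂ) * (Nat.factorial n' : ℂ))) *
        (∫ t in (0:ℝ)..1, ∫ s in (0:ℝ)..1,
          ((s : ℂ) ^ n' * (1 - (s : ℂ)) ^ k * (t : ℂ) ^ m' * (1 - (t : ℂ)) ^ (n' + k + 1)) *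
            Complex.exp (((t : ℂ) * (-α) + (1 - (t : ℂ)) * ((s : ℂ) * β)) *
              ((Real.log q : ℝ) : ℂ)))) =
      ((2 * (Real.pi : ℂ) * Complex.I) / (2 * (Real.pi : ℂ) * Complex.I)) *
      ((((Real.log q : ℝ) : ℂ) ^ (m' + n' + k + 2) /
        ((Nat.factorial k : ℂ) * (Nat.factorial m' : ℂ) * (Nat.factorial n' : ℂ))) *
        (∫ t in (0:ℝ)..1, ∫ s in (0:ℝ)..1,
          ((s : ℂ) ^ n' * (1 - (s : ℂ)) ^ k * (t : ℂ) ^ m' * (1 - (t : ℂ)) ^ (n' + k + 1)) *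
            Complex.exp (((t : ℂ) * (-α) + (1 - (t : ℂ)) * ((s : ℂ) * β)) *
              ((Real.log q : ℝ) : ℂ)))) from by ring,
    div_self h2πi, one_mul]

/-- For integers `m, n ≥ 1`, `k ≥ 0`, reals `r, q > 0` and `α, β ∈ ℂ` with
`|α| < r`, `|β| < r`:
`(1/(2πi)) ∮_{|u|=r} q^u (α+u)^{-m} (u-β)^{-n} u^{-(k+1)} du
  = ((log q)^{k+m+n}/(k!(m-1)!(n-1)!)) ∬_{a,b ≥ 0, a+b ≤ 1} (1-a-b)^k q^{-aα+bβ} a^{m-1} b^{n-1} da db`. -/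
theorem circleIntegral_two_poles_eq_simplex_integral
    (m n k : ℕ) (hm : 1 ≤ m) (hn : 1 ≤ n) (r q : ℝ) (hr : 0 < r) (hq : 0 < q)
    (α β : ℂ) (hα : ‖α‖ < r) (hβ : ‖β‖ < r) :
    (1 / (2 * (Real.pi : ℂ) * Complex.I)) *
        (∮ u in C(0, r),
          Complex.exp (u * Real.log q) / ((α + u) ^ m * (u - β) ^ n * u ^ (k + 1)))
      = ((Real.log q ^ (k + m + n) /
            ((Nat.factorial k : ℝ) * (Nat.factorial (m - 1) : ℝ) * (Nat.factorial (n - 1) : ℝ)) : ℝ) : ℂ)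
          * ∫ p in {p : ℝ × ℝ | 0 ≤ p.1 ∧ 0 ≤ p.2 ∧ p.1 + p.2 ≤ 1},
              (((1 - p.1 - p.2) ^ k * p.1 ^ (m - 1) * p.2 ^ (n - 1) : ℝ) : ℂ)
                * Complex.exp ((-(p.1 : ℂ) * α + (p.2 : ℂ) * β) * Real.log q) := by
  exact circleIntegral_two_poles_eq_simplex_integral' m n k hm hn r q hr hq α β hα hβ
end

section
/- For every a ∈ ℂ and every real number i > -1, lim_{ℓ → 1⁺} (1/Γ(ℓ-1)) ∫_0^1 e^{-au} u^{ℓ-2} (1-u)^{i+ℓ-ℓ²} du = 1, the limit being taken over real ℓ decreasing to 1 (for real ℓ > 1 sufficiently close to 1 the integral converges absolutely). -/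
open Filter MeasureTheory intervalIntegral

lemma betaIntegrable {p q : ℝ} (hp : -1 < p) (hq : -1 < q) :
    IntervalIntegrable (fun u : ℝ => u ^ p * (1 - u) ^ q) volume 0 1 := by
  have h := (Complex.betaIntegral_convergent (u := (p:ℂ) + 1) (v := (q:ℂ) + 1)
    (by simp; linarith) (by simp; linarith)).norm
  rw [intervalIntegrable_iff_integrableOn_Ioo_of_le (by norm_num)] at h ⊢
  refine h.congr_fun (fun x hx => ?_) measurableSet_Ioo
  obtain ⟨hx0, hx1⟩ := hx
  simp only [add_sub_cancel_right, norm_mul]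
  rw [Complex.norm_cpow_eq_rpow_re_of_pos hx0, ← Complex.ofReal_one, ← Complex.ofReal_sub,
    Complex.norm_cpow_eq_rpow_re_of_pos (by linarith), Complex.ofReal_re, Complex.ofReal_re]

lemma betaIntegrableC {p q : ℝ} (hp : -1 < p) (hq : -1 < q) (a : ℂ) :
    IntervalIntegrable (fun u : ℝ =>
      Complex.exp (-a * u) * ((u ^ p * (1 - u) ^ q : ℝ) : ℂ)) volume 0 1 := by
  have h1 : IntervalIntegrable (fun u : ℝ => ((u ^ p * (1 - u) ^ q : ℝ) : ℂ)) volume 0 1 :=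
    ⟨(betaIntegrable hp hq).1.ofReal, (betaIntegrable hp hq).2.ofReal⟩
  exact h1.continuousOn_mul (Continuous.continuousOn (by continuity))

set_option maxHeartbeats 4000000 in
lemma key (a : ℂ) (i : ℝ) (hi : -1 < i) :
    Filter.Tendsto (fun ℓ : ℝ => ((ℓ : ℂ) - 1) * ∫ u in (0:ℝ)..1,
        Complex.exp (-a * u) * ((u ^ (ℓ - 2) * (1 - u) ^ (i + ℓ - ℓ ^ 2) : ℝ) : ℂ))
      (nhdsWithin 1 (Set.Ioi 1)) (nhds 1) := by
  -- constants
  set M : ℝ := |i| + 2 with hM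
  have hM2 : 2 ≤ M := by have := abs_nonneg i; linarith
  set η₀ : ℝ := min 1 ((i + 1) / 4) with hη₀
  have hη₀pos : 0 < η₀ := lt_min one_pos (by linarith)
  have hη₀le : η₀ ≤ (i + 1) / 4 := min_le_right _ _
  have hη₀le1 : η₀ ≤ 1 := min_le_left _ _
  set c₀ : ℝ := min ((i - 1) / 2) 0 with hc₀
  have hc₀gt : -1 < c₀ := lt_min (by linarith) (by norm_num)
  have hc₀le : c₀ ≤ 0 := min_le_right _ _
  -- exponent bounds for ℓ ∈ Ioo 1 (1+η₀)
  have hexp : ∀ ℓ : ℝ, 1 < ℓ → ℓ < 1 + η₀ →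
      c₀ ≤ i + ℓ - ℓ ^ 2 ∧ |i + ℓ - ℓ ^ 2| ≤ M := by
    intro ℓ h1 h2
    have h2' : ℓ < 2 := by linarith
    have hll : ℓ * (ℓ - 1) ≤ 2 * η₀ := by nlinarith
    have hll0 : 0 ≤ ℓ * (ℓ - 1) := by nlinarith
    have hkey : i + ℓ - ℓ ^ 2 = i - ℓ * (ℓ - 1) := by ring
    constructor
    · rw [hkey]
      have : c₀ ≤ (i - 1) / 2 := min_le_left _ _
      linarith
    · rw [hkey, abs_le]
      have hia := abs_nonneg i
      have h1a := le_abs_self i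
      have h2a := neg_abs_le i
      constructor <;> [nlinarith; nlinarith]
  -- the dominating function
  set Φ : ℝ → ℝ := fun u => Real.exp ‖a‖ * ((1 - u) ^ c₀ + 1) + 1 with hΦ
  have hΦint : IntervalIntegrable Φ volume 0 1 := by
    have h1 : IntervalIntegrable (fun u : ℝ => u ^ c₀) volume 0 1 :=
      intervalIntegrable_rpow' hc₀gt
    have h2 := (h1.comp_sub_left 1)
    simp only [sub_self, sub_zero] at h2
    exact (((h2.symm.add (_root_.intervalIntegrable_const (c := (1:ℝ))))).const_mul
      (Real.exp ‖a‖)).add (_root_.intervalIntegrable_const (c := (1:ℝ)))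
  have hΦnonneg : ∀ u ∈ Set.Icc (0:ℝ) 1, 0 ≤ Φ u := by
    intro u hu
    have h1 : (0:ℝ) ≤ (1 - u) ^ c₀ := Real.rpow_nonneg (by linarith [hu.2]) _
    have h2 := Real.exp_pos ‖a‖
    show 0 ≤ Real.exp ‖a‖ * ((1 - u) ^ c₀ + 1) + 1
    nlinarith
  set C : ℝ := ∫ u in (0:ℝ)..1, Φ u with hC
  have hCnonneg : 0 ≤ C := intervalIntegral.integral_nonneg (by norm_num) hΦnonneg
  rw [Metric.tendsto_nhdsWithin_nhds]
  intro ε hε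
  set K : ℝ := 4 * M + 4 * ‖a‖ + 1 with hK
  have hKpos : 0 < K := by have := norm_nonneg a; positivity
  set δ : ℝ := min (1 / (2 * M + 2 * ‖a‖ + 2)) (ε / (4 * K)) with hδ
  have hδpos : 0 < δ := lt_min (by have := norm_nonneg a; positivity) (by positivity)
  have hδa : δ * (2 * M + 2 * ‖a‖ + 2) ≤ 1 := by
    rw [← le_div_iff₀ (by have := norm_nonneg a; positivity)]
    exact min_le_left _ _
  have hδhalf : δ ≤ 1 / 2 := by
    have h6 : δ * 6 ≤ δ * (2 * M + 2 * ‖a‖ + 2) :=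
      mul_le_mul_of_nonneg_left (by linarith [norm_nonneg a]) hδpos.le
    linarith
  have hδ1 : δ ≤ 1 := by linarith
  have hδε : K * δ ≤ ε / 4 := by
    have : δ ≤ ε / (4 * K) := min_le_right _ _
    calc K * δ ≤ K * (ε / (4 * K)) := mul_le_mul_of_nonneg_left this hKpos.le
      _ = K * ε / (4 * K) := (mul_div_assoc _ _ _).symm
      _ = K * ε / (K * 4) := by rw [mul_comm 4 K]
      _ = ε / 4 := mul_div_mul_left ε 4 hKpos.ne'
  refine ⟨min η₀ (δ * ε / (4 * (C + 1))), lt_min hη₀pos (by positivity), ?_⟩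
  intro ℓ hℓmem hℓdist
  have h1 : 1 < ℓ := hℓmem
  have hdist : ℓ - 1 < min η₀ (δ * ε / (4 * (C + 1))) := by
    rwa [Real.dist_eq, abs_of_pos (by linarith)] at hℓdist
  have h2 : ℓ < 1 + η₀ := by have := hdist.trans_le (min_le_left _ _); linarith
  have hℓ2 : ℓ < 2 := by linarith
  have hℓη : ℓ - 1 ≤ δ * ε / (4 * (C + 1)) := le_of_lt (hdist.trans_le (min_le_right _ _))
  obtain ⟨hcge, hcabs⟩ := hexp ℓ h1 h2
  set c : ℝ := i + ℓ - ℓ ^ 2 with hc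
  have hcgt : -1 < c := lt_of_lt_of_le hc₀gt hcge
  set r : ℝ := ℓ - 2 with hr
  have hrgt : -1 < r := by simp [hr]; linarith
  have hrle : r ≤ 0 := by simp [hr]; linarith
  have hrne : r + 1 ≠ 0 := by simp [hr]; intro h; linarith
  -- integrands
  set E : ℝ → ℂ := fun u => Complex.exp (-a * u) * (((1 - u) ^ c : ℝ) : ℂ) with hE
  set f : ℝ → ℂ := fun u =>
    Complex.exp (-a * u) * ((u ^ r * (1 - u) ^ c : ℝ) : ℂ) with hf
  set g : ℝ → ℂ := fun u => ((u ^ r : ℝ) : ℂ) with hg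
  set ψ : ℝ → ℂ := fun u => f u - g u with hψ
  have hfg : ∀ u : ℝ, ψ u = ((u ^ r : ℝ) : ℂ) * (E u - 1) := by
    intro u
    simp only [hψ, hf, hg, hE]
    push_cast
    ring
  have fInt : IntervalIntegrable f volume 0 1 := betaIntegrableC hrgt hcgt a
  have gInt : IntervalIntegrable g volume 0 1 :=
    ⟨(intervalIntegrable_rpow' hrgt (a := 0) (b := 1)).1.ofReal,
     (intervalIntegrable_rpow' hrgt (a := 0) (b := 1)).2.ofReal⟩
  have ψInt : IntervalIntegrable ψ volume 0 1 := fInt.sub gInt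
  -- value of ∫ g
  have hgval : (∫ u in (0:ℝ)..1, g u) = (((ℓ - 1)⁻¹ : ℝ) : ℂ) := by
    have hval : (∫ u in (0:ℝ)..1, u ^ r) = (ℓ - 1)⁻¹ := by
      rw [integral_rpow (Or.inl hrgt), Real.one_rpow, Real.zero_rpow hrne,
        show r + 1 = ℓ - 1 by rw [hr]; ring]
      ring
    rw [hg, intervalIntegral.integral_ofReal, hval]
  -- key identity
  have hkey : ((ℓ:ℂ) - 1) * (∫ u in (0:ℝ)..1, f u) - 1
      = ((ℓ:ℂ) - 1) * ∫ u in (0:ℝ)..1, ψ u := by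
    have := intervalIntegral.integral_sub fInt gInt
    rw [show (fun u => ψ u) = fun u => f u - g u from rfl, this, hgval]
    have hne : ((ℓ:ℂ) - 1) ≠ 0 := by
      intro h
      have : (ℓ:ℂ) = 1 := by linear_combination h
      have : ℓ = 1 := by exact_mod_cast this
      linarith
    have : ((ℓ:ℂ) - 1) * (((ℓ - 1)⁻¹ : ℝ) : ℂ) = 1 := by
      push_cast
      field_simp
    ring_nf
    ring_nf at this
    linear_combination this
  -- small-u bound
  have hinv2 : ∀ u : ℝ, u ≤ 1/2 → (1 - u)⁻¹ ≤ 2 := by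
    intro u hu
    have := inv_anti₀ (show (0:ℝ) < 1/2 by norm_num) (show 1/2 ≤ 1 - u by linarith)
    norm_num at this
    linarith
  have hsmall : ∀ u ∈ Set.Icc (0:ℝ) δ, ‖E u - 1‖ ≤ K * δ := by
    intro u hu
    obtain ⟨hu0, huδ⟩ := hu
    have hu1 : u ≤ 1/2 := le_trans huδ hδhalf
    have h1u : (0:ℝ) < 1 - u := by linarith
    have h1u' : 1 - u ≤ 1 := by linarith
    have hai : (0:ℝ) ≤ ‖a‖ := norm_nonneg a
    have ht2 : (1 - u) ^ c ≤ 2 := by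
      have hb1 : (1-u) ^ c ≤ (1-u) ^ c₀ := Real.rpow_le_rpow_of_exponent_ge h1u h1u' hcge
      have hb2 : (1-u) ^ c₀ ≤ (1-u) ^ (-1 : ℝ) :=
        Real.rpow_le_rpow_of_exponent_ge h1u h1u' (by linarith)
      rw [Real.rpow_neg_one] at hb2
      have := hinv2 u hu1
      linarith
    have htnn : (0:ℝ) ≤ (1-u) ^ c := Real.rpow_nonneg h1u.le _
    have hexpb : ‖Complex.exp (-a * u) - 1‖ ≤ 2 * (‖a‖ * u) := by
      have habs : ‖-a * (u:ℂ)‖ = ‖a‖ * u := by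
        rw [norm_mul, norm_neg, Complex.norm_real, Real.norm_eq_abs, abs_of_nonneg hu0]
      have hle1 : ‖-a * (u:ℂ)‖ ≤ 1 := by
        rw [habs]
        calc ‖a‖ * u ≤ ‖a‖ * δ := mul_le_mul_of_nonneg_left huδ hai
          _ ≤ (2*M+2*‖a‖+2) * δ := mul_le_mul_of_nonneg_right (by linarith) hδpos.le
          _ = δ * (2*M+2*‖a‖+2) := mul_comm _ _
          _ ≤ 1 := hδa
      have h := Complex.norm_exp_sub_one_le hle1
      rw [habs] at h
      exact h
    have hlog : |Real.log (1-u)| ≤ 2 * u := by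
      rw [abs_of_nonpos (Real.log_nonpos (by linarith) h1u')]
      have h2 : Real.log (1-u)⁻¹ ≤ (1-u)⁻¹ - 1 := Real.log_le_sub_one_of_pos (by positivity)
      rw [Real.log_inv] at h2
      have h4 : 1/(1-u) ≤ 1 + 2*u := by
        rw [div_le_iff₀ h1u]
        nlinarith [mul_nonneg hu0 (by linarith : (0:ℝ) ≤ 1 - 2*u)]
      rw [one_div] at h4
      linarith
    have hrpowb : |(1-u) ^ c - 1| ≤ 2 * (M * (2 * u)) := by
      rw [Real.rpow_def_of_pos h1u]
      have hxb : |Real.log (1-u) * c| ≤ M * (2*u) := by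
        rw [abs_mul]
        have h5 : |Real.log (1-u)| * |c| ≤ (2*u) * M := by
          apply mul_le_mul hlog hcabs (abs_nonneg _) (by linarith)
        linarith
      have hx1 : |Real.log (1-u) * c| ≤ 1 := by
        refine hxb.trans ?_
        calc M * (2*u) = 2*M*u := by ring
          _ ≤ 2*M*δ := mul_le_mul_of_nonneg_left huδ (by linarith)
          _ ≤ (2*M+2*‖a‖+2)*δ := mul_le_mul_of_nonneg_right (by linarith [norm_nonneg a]) hδpos.le
          _ = δ*(2*M+2*‖a‖+2) := mul_comm _ _
          _ ≤ 1 := hδa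
      have := Real.abs_exp_sub_one_le hx1
      linarith [this, hxb]
    have hcast : ‖(((1-u)^c : ℝ) : ℂ) - 1‖ = |(1-u)^c - 1| := by
      rw [show (((1-u)^c : ℝ) : ℂ) - 1 = (((1-u)^c - 1 : ℝ) : ℂ) by push_cast; ring,
        Complex.norm_real, Real.norm_eq_abs]
    have hEdecomp : E u - 1
        = (Complex.exp (-a * u) - 1) * (((1-u)^c : ℝ) : ℂ) + ((((1-u)^c : ℝ) : ℂ) - 1) := by
      simp only [hE]; ring
    calc ‖E u - 1‖ ≤ ‖(Complex.exp (-a * u) - 1) * (((1-u)^c : ℝ) : ℂ)‖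
          + ‖(((1-u)^c : ℝ) : ℂ) - 1‖ := by rw [hEdecomp]; exact norm_add_le _ _
      _ = ‖Complex.exp (-a * u) - 1‖ * (1-u)^c + |(1-u)^c - 1| := by
          rw [norm_mul, Complex.norm_real, Real.norm_eq_abs, abs_of_nonneg htnn, hcast]
      _ ≤ (2 * (‖a‖ * u)) * 2 + 2 * (M * (2*u)) := by
          have := mul_le_mul hexpb ht2 htnn (by positivity)
          linarith [hrpowb]
      _ ≤ K * δ := by
          calc 2 * (‖a‖ * u) * 2 + 2 * (M * (2*u)) = (4*‖a‖+4*M)*u := by ring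
            _ ≤ (4*‖a‖+4*M)*δ := mul_le_mul_of_nonneg_left huδ (by linarith)
            _ ≤ K*δ := mul_le_mul_of_nonneg_right (by rw [hK]; linarith) hδpos.le
  -- large-u bound
  have hbig : ∀ u ∈ Set.Icc δ (1:ℝ), ‖E u - 1‖ ≤ Φ u := by
    intro u hu
    obtain ⟨huδ, hu1⟩ := hu
    have hu0 : (0:ℝ) ≤ u := le_trans hδpos.le huδ
    have hEnorm : ‖E u‖ ≤ Real.exp ‖a‖ * ((1-u) ^ c₀ + 1) := by
      have h1 : ‖Complex.exp (-a * u)‖ ≤ Real.exp ‖a‖ := by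
        rw [Complex.norm_exp]
        apply Real.exp_le_exp.mpr
        have hre : (-a * (u:ℂ)).re = -a.re * u := by simp [Complex.mul_re]
        rw [hre]
        have h2 : |a.re| ≤ ‖a‖ := Complex.abs_re_le_norm a
        have h6 : -a.re * u ≤ |a.re| * u := mul_le_mul_of_nonneg_right (neg_le_abs a.re)
          (le_trans hδpos.le huδ)
        have h7 : |a.re| * u ≤ |a.re| * 1 := mul_le_mul_of_nonneg_left hu1 (abs_nonneg _)
        linarith
      have h2 : (1-u) ^ c ≤ (1-u) ^ c₀ + 1 := by
        rcases lt_or_eq_of_le hu1 with h | h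
        · have := Real.rpow_le_rpow_of_exponent_ge (by linarith : (0:ℝ) < 1-u)
            (by linarith) hcge
          linarith
        · subst h
          simp only [sub_self]
          have h0c : (0:ℝ) ^ c ≤ 1 := by
            rcases eq_or_ne c 0 with h | h
            · simp [h]
            · simp [Real.zero_rpow h]
          have h0c' : (0:ℝ) ≤ (0:ℝ) ^ c₀ := Real.rpow_nonneg le_rfl _
          linarith
      have htnn : (0:ℝ) ≤ (1-u) ^ c := Real.rpow_nonneg (by linarith) _
      calc ‖E u‖ = ‖Complex.exp (-a * u)‖ * (1-u)^c := by
            rw [hE, norm_mul, Complex.norm_real, Real.norm_eq_abs, abs_of_nonneg htnn]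
        _ ≤ Real.exp ‖a‖ * ((1-u) ^ c₀ + 1) := by
            apply mul_le_mul h1 h2 htnn (Real.exp_pos _).le
    calc ‖E u - 1‖ ≤ ‖E u‖ + 1 := by
          simpa using norm_sub_le (E u) 1
      _ ≤ Φ u := by simp only [hΦ]; linarith
  -- norm of ψ
  have hψnorm : ∀ u : ℝ, 0 ≤ u → ‖ψ u‖ = u ^ r * ‖E u - 1‖ := by
    intro u hu
    rw [hfg u, norm_mul, Complex.norm_real, Real.norm_eq_abs,
      abs_of_nonneg (Real.rpow_nonneg hu _)]
  have hsub1 : Set.uIcc (0:ℝ) δ ⊆ Set.uIcc (0:ℝ) 1 := by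
    rw [Set.uIcc_of_le hδpos.le, Set.uIcc_of_le (by norm_num)]
    exact Set.Icc_subset_Icc le_rfl hδ1
  have hsub2 : Set.uIcc δ (1:ℝ) ⊆ Set.uIcc (0:ℝ) 1 := by
    rw [Set.uIcc_of_le hδ1, Set.uIcc_of_le (by norm_num)]
    exact Set.Icc_subset_Icc hδpos.le le_rfl
  have hsplit : (∫ u in (0:ℝ)..1, ‖ψ u‖)
      = (∫ u in (0:ℝ)..δ, ‖ψ u‖) + ∫ u in δ..1, ‖ψ u‖ :=
    (intervalIntegral.integral_add_adjacent_intervals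
      (ψInt.norm.mono_set hsub1) (ψInt.norm.mono_set hsub2)).symm
  -- bound B1
  have hB1 : (∫ u in (0:ℝ)..δ, ‖ψ u‖) ≤ K * δ * (ℓ-1)⁻¹ := by
    have hmono : (∫ u in (0:ℝ)..δ, ‖ψ u‖) ≤ ∫ u in (0:ℝ)..δ, K * δ * u ^ r := by
      apply intervalIntegral.integral_mono_on hδpos.le (ψInt.norm.mono_set hsub1)
        ((intervalIntegrable_rpow' hrgt).const_mul _)
      intro u hu
      rw [hψnorm u hu.1, mul_comm (K * δ)]
      exact mul_le_mul_of_nonneg_left (hsmall u hu) (Real.rpow_nonneg hu.1 _)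
    have hval : (∫ u in (0:ℝ)..δ, u ^ r) = δ ^ (ℓ-1) / (ℓ-1) := by
      rw [integral_rpow (Or.inl hrgt), Real.zero_rpow hrne,
        show r + 1 = ℓ - 1 by rw [hr]; ring]
      ring
    rw [intervalIntegral.integral_const_mul, hval] at hmono
    have hδp1 : δ ^ (ℓ-1) ≤ 1 := Real.rpow_le_one hδpos.le hδ1 (by linarith)
    have hl1 : (0:ℝ) < (ℓ-1)⁻¹ := inv_pos.mpr (by linarith)
    calc (∫ u in (0:ℝ)..δ, ‖ψ u‖) ≤ K * δ * (δ ^ (ℓ-1) / (ℓ-1)) := hmono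
      _ ≤ K * δ * (ℓ-1)⁻¹ := by
          apply mul_le_mul_of_nonneg_left _ (by positivity)
          rw [div_eq_mul_inv]
          exact mul_le_of_le_one_left hl1.le hδp1
  -- bound B2
  have hΦC : (∫ u in δ..1, Φ u) ≤ C := by
    have hsplitΦ : C = (∫ u in (0:ℝ)..δ, Φ u) + ∫ u in δ..1, Φ u :=
      (intervalIntegral.integral_add_adjacent_intervals
        (hΦint.mono_set hsub1) (hΦint.mono_set hsub2)).symm
    have h0 : (0:ℝ) ≤ ∫ u in (0:ℝ)..δ, Φ u :=
      intervalIntegral.integral_nonneg hδpos.le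
        (fun u hu => hΦnonneg u ⟨hu.1, le_trans hu.2 hδ1⟩)
    linarith [hsplitΦ]
  have hB2 : (∫ u in δ..1, ‖ψ u‖) ≤ δ⁻¹ * C := by
    have hmono : (∫ u in δ..1, ‖ψ u‖) ≤ ∫ u in δ..1, δ⁻¹ * Φ u := by
      apply intervalIntegral.integral_mono_on hδ1 (ψInt.norm.mono_set hsub2)
        ((hΦint.mono_set hsub2).const_mul _)
      intro u hu
      rw [hψnorm u (le_trans hδpos.le hu.1)]
      have hur : u ^ r ≤ δ⁻¹ := by
        have h1 : u ^ r ≤ δ ^ r := Real.rpow_le_rpow_of_nonpos hδpos hu.1 hrle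
        have h2 : δ ^ r ≤ δ ^ (-1:ℝ) :=
          Real.rpow_le_rpow_of_exponent_ge hδpos hδ1 (by linarith)
        rw [Real.rpow_neg_one] at h2
        linarith
      exact mul_le_mul hur (hbig u hu) (norm_nonneg _) (by positivity)
    rw [intervalIntegral.integral_const_mul] at hmono
    calc (∫ u in δ..1, ‖ψ u‖) ≤ δ⁻¹ * ∫ u in δ..1, Φ u := hmono
      _ ≤ δ⁻¹ * C := mul_le_mul_of_nonneg_left hΦC (by positivity)
  -- assembly
  have hnormψ : ‖∫ u in (0:ℝ)..1, ψ u‖ ≤ K * δ * (ℓ-1)⁻¹ + δ⁻¹ * C := by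
    calc ‖∫ u in (0:ℝ)..1, ψ u‖ ≤ ∫ u in (0:ℝ)..1, ‖ψ u‖ :=
          intervalIntegral.norm_integral_le_integral_norm (by norm_num)
      _ = (∫ u in (0:ℝ)..δ, ‖ψ u‖) + ∫ u in δ..1, ‖ψ u‖ := hsplit
      _ ≤ K * δ * (ℓ-1)⁻¹ + δ⁻¹ * C := add_le_add hB1 hB2
  rw [Complex.dist_eq, hkey,
    show ((ℓ:ℂ) - 1) = (((ℓ - 1 : ℝ)) : ℂ) by push_cast; ring,
    norm_mul, Complex.norm_real, Real.norm_eq_abs, abs_of_pos (by linarith : (0:ℝ) < ℓ - 1)]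
  have hl1pos : (0:ℝ) < ℓ - 1 := by linarith
  have hfinal : (ℓ - 1) * ‖∫ u in (0:ℝ)..1, ψ u‖
      ≤ (ℓ-1) * (K * δ * (ℓ-1)⁻¹ + δ⁻¹ * C) :=
    mul_le_mul_of_nonneg_left hnormψ hl1pos.le
  have hid : (ℓ-1) * (K * δ * (ℓ-1)⁻¹ + δ⁻¹ * C) = K * δ + (ℓ-1) * δ⁻¹ * C := by
    field_simp
  have hterm2 : (ℓ-1) * δ⁻¹ * C ≤ ε / 4 := by
    have h1 : (ℓ-1) * δ⁻¹ * C ≤ (δ * ε / (4 * (C + 1))) * δ⁻¹ * C := by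
      apply mul_le_mul_of_nonneg_right _ hCnonneg
      exact mul_le_mul_of_nonneg_right hℓη (by positivity)
    have hδδ : δ * δ⁻¹ = 1 := mul_inv_cancel₀ hδpos.ne'
    have hDpos : (0:ℝ) < 4 * (C + 1) := by linarith
    have h3 : ε * C / (4 * (C + 1)) ≤ ε / 4 := by
      rw [div_le_div_iff₀ hDpos (by norm_num : (0:ℝ) < 4)]
      nlinarith [mul_le_mul_of_nonneg_left (show C ≤ C + 1 by linarith) hε.le]
    calc (ℓ-1) * δ⁻¹ * C ≤ (δ * ε / (4 * (C + 1))) * δ⁻¹ * C := h1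
      _ = (δ * δ⁻¹) * (ε * C / (4 * (C + 1))) := by ring
      _ = ε * C / (4 * (C + 1)) := by rw [hδδ, one_mul]
      _ ≤ ε / 4 := h3
  calc (ℓ - 1) * ‖∫ u in (0:ℝ)..1, ψ u‖ ≤ K * δ + (ℓ-1) * δ⁻¹ * C := by
        rw [← hid]; exact hfinal
    _ ≤ ε / 4 + ε / 4 := add_le_add hδε hterm2
    _ < ε := by linarith

/-- For every `a ∈ ℂ` and every real `i > -1`,
`lim_{ℓ → 1⁺} (1/Γ(ℓ-1)) ∫₀¹ e^{-au} u^{ℓ-2} (1-u)^{i+ℓ-ℓ²} du = 1`,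
the limit being over real `ℓ` decreasing to `1`; moreover for real `ℓ > 1` close enough
to `1` the integral converges absolutely. -/
theorem tendsto_gamma_normalized_integral_one
    (a : ℂ) (i : ℝ) (hi : -1 < i) :
    (∀ᶠ ℓ : ℝ in nhdsWithin 1 (Set.Ioi 1),
        IntervalIntegrable
          (fun u : ℝ =>
            Complex.exp (-a * u) * ((u ^ (ℓ - 2) * (1 - u) ^ (i + ℓ - ℓ ^ 2) : ℝ) : ℂ))
          volume 0 1) ∧
    Filter.Tendsto
      (fun ℓ : ℝ =>
        ((1 / Real.Gamma (ℓ - 1) : ℝ) : ℂ)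
          * ∫ u in (0:ℝ)..1,
              Complex.exp (-a * u) * ((u ^ (ℓ - 2) * (1 - u) ^ (i + ℓ - ℓ ^ 2) : ℝ) : ℂ))
      (nhdsWithin 1 (Set.Ioi 1)) (nhds 1) := by
  have hmemIoo : Set.Ioo (1:ℝ) (1 + min 1 ((i+1)/4)) ∈ nhdsWithin 1 (Set.Ioi 1) :=
    Ioo_mem_nhdsGT_of_mem (Set.left_mem_Ico.mpr
      (by have : (0:ℝ) < min 1 ((i+1)/4) := lt_min one_pos (by linarith); linarith))
  have hcbound : ∀ ℓ : ℝ, ℓ ∈ Set.Ioo (1:ℝ) (1 + min 1 ((i+1)/4)) → -1 < i + ℓ - ℓ ^ 2 := by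
    intro ℓ hℓ
    obtain ⟨h1, h2⟩ := hℓ
    have h3 : ℓ - 1 < (i+1)/4 := by
      have := h2.trans_le (by linarith [min_le_right (1:ℝ) ((i+1)/4)] : 1 + min 1 ((i+1)/4) ≤ 1 + (i+1)/4)
      linarith
    have h4 : ℓ < 2 := by
      have := h2.trans_le (by linarith [min_le_left (1:ℝ) ((i+1)/4)] : 1 + min 1 ((i+1)/4) ≤ 2)
      linarith
    nlinarith [mul_pos (show (0:ℝ) < ℓ by linarith) (show (0:ℝ) < ℓ - 1 by linarith)]
  constructor
  · filter_upwards [hmemIoo] with ℓ hℓ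
    exact betaIntegrableC (by linarith [hℓ.1] : (-1:ℝ) < ℓ - 2) (hcbound ℓ hℓ) a
  · have hG := key a i hi
    have hΓ : Filter.Tendsto (fun ℓ : ℝ => (((Real.Gamma ℓ)⁻¹ : ℝ) : ℂ))
        (nhdsWithin 1 (Set.Ioi 1)) (nhds 1) := by
      have hcont : ContinuousAt Real.Gamma 1 := by
        refine (Real.differentiableAt_Gamma (fun m => ?_)).continuousAt
        have h2 : (0:ℝ) ≤ (m:ℝ) := Nat.cast_nonneg m
        intro h
        linarith [h, h2]
      have h1 : Filter.Tendsto Real.Gamma (nhdsWithin 1 (Set.Ioi 1)) (nhds 1) := by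
        have := hcont.tendsto.mono_left (nhdsWithin_le_nhds (s := Set.Ioi (1:ℝ)))
        rwa [Real.Gamma_one] at this
      have h2 := h1.inv₀ (by norm_num : (1:ℝ) ≠ 0)
      norm_num at h2
      have h3 := (Complex.continuous_ofReal.tendsto 1).comp h2
      simpa [Function.comp_def, Complex.ofReal_inv] using h3
    have hmul := hΓ.mul hG
    rw [one_mul] at hmul
    refine hmul.congr' ?_
    filter_upwards [self_mem_nhdsWithin] with ℓ (hℓ : 1 < ℓ)
    have hΓpos : 0 < Real.Gamma (ℓ-1) := Real.Gamma_pos_of_pos (by linarith)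
    have hGadd : Real.Gamma ℓ = (ℓ-1) * Real.Gamma (ℓ-1) := by
      have h := Real.Gamma_add_one (s := ℓ-1) (by intro h; rw [sub_eq_zero] at h; simp [h] at hℓ)
      rw [sub_add_cancel] at h
      exact h
    have hreal : ((Real.Gamma ℓ)⁻¹ * (ℓ - 1) : ℝ) = 1 / Real.Gamma (ℓ-1) := by
      rw [hGadd, mul_inv, mul_comm ((ℓ-1):ℝ)⁻¹, mul_assoc,
        inv_mul_cancel₀ (ne_of_gt (by linarith : (0:ℝ) < ℓ - 1)), mul_one, one_div]
    rw [← hreal]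
    push_cast
    ring
end
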